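/- arXiv:2002.03320 — 2 statements merged into one kernel-verified Lean document; each statement's English description precedes it below -/
import Mathlib

section
/- Consider the family g_{a,b}(z) = a·tan(z) + b on the upper half-plane ℍ, with a > 0 and b ∈ (−π/2, π/2]. Then: (1) no two different maps g_{a,b} and g_{ã,b̃} with (a,b) ≠ (ã,b̃) are conformally conjugate (by a Möbius automorphism of ℍ); and (2) g_{a,b} has an attracting fixed point in ℍ if and only if a > 1, or a ≤ 1 and |b| > arccos(√a) − √a·√(1 − a). -/
open Complex Filter Set Metric Topology
open scoped ENNReal Real Topology

noncomputable section

/-- The open unit disc in `ℂ`. -/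
def unitDisc : Set ℂ := Metric.ball 0 1

/-- The upper half-plane in `ℂ`. -/
def upperHalf : Set ℂ := {z : ℂ | 0 < z.im}

/-- A transcendental entire function: entire but not a polynomial. -/
def TranscendentalEntire (f : ℂ → ℂ) : Prop :=
  Differentiable ℂ f ∧ ¬ ∃ p : Polynomial ℂ, ∀ z, f z = p.eval z

/-- An inner function of the unit disc: a holomorphic self-map of the disc whose radial
limits exist and have modulus one at almost every boundary point. -/
def IsInner (g : ℂ → ℂ) : Prop :=
  MapsTo g unitDisc unitDisc ∧ DifferentiableOn ℂ g unitDisc ∧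
    ∀ᵐ θ : ℝ ∂MeasureTheory.volume, ∃ c : ℂ, ‖c‖ = 1 ∧
      Tendsto (fun t : ℝ => g ((t : ℂ) * Complex.exp (θ * Complex.I)))
        (nhdsWithin (1 : ℝ) (Set.Iio 1)) (nhds c)

/-- The Blaschke factor with zero `a` (interpreted as `z` when `a = 0`). -/
def blaschkeFactor (a z : ℂ) : ℂ :=
  if a = 0 then z
  else (((‖a‖ : ℝ) : ℂ) / a) * ((a - z) / (1 - (starRingEnd ℂ) a * z))

/-- `g` is a finite Blaschke product of degree `d`. -/
def IsFiniteBlaschke (d : ℕ) (g : ℂ → ℂ) : Prop :=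
  ∃ (θ : ℝ) (a : Fin d → ℂ), (∀ i, ‖a i‖ < 1) ∧
    ∀ z : ℂ, g z = Complex.exp (θ * Complex.I) * ∏ i, blaschkeFactor (a i) z

/-- `g` agrees on the unit disc with an infinite Blaschke product. -/
def IsInfiniteBlaschke (g : ℂ → ℂ) : Prop :=
  ∃ (θ : ℝ) (a : ℕ → ℂ), (∀ n, ‖a n‖ < 1) ∧
    Summable (fun n => 1 - ‖a n‖) ∧
    ∀ z ∈ unitDisc, g z = Complex.exp (θ * Complex.I) * ∏' n, blaschkeFactor (a n) z

/-- A conformal bijection (Riemann map) from `S` onto `U`. -/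
def ConformalBijOn (φ : ℂ → ℂ) (S U : Set ℂ) : Prop :=
  DifferentiableOn ℂ φ S ∧ BijOn φ S U

/-- `g` is an inner function associated to `f : U → V` via Riemann maps `φ, ψ`,
i.e. `g = ψ⁻¹ ∘ f ∘ φ` on the unit disc. -/
def AssociatedInner (f : ℂ → ℂ) (U V : Set ℂ) (g : ℂ → ℂ) : Prop :=
  ∃ φ ψ : ℂ → ℂ, ConformalBijOn φ unitDisc U ∧ ConformalBijOn ψ unitDisc V ∧
    MapsTo g unitDisc unitDisc ∧ DifferentiableOn ℂ g unitDisc ∧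
    ∀ z ∈ unitDisc, ψ (g z) = f (φ z)

/-- `g` is an inner function dynamically associated to `f|_U`, i.e. `g = φ⁻¹ ∘ f ∘ φ`
for a Riemann map `φ : 𝔻 → U`. -/
def DynAssociated (f : ℂ → ℂ) (U : Set ℂ) (g : ℂ → ℂ) : Prop :=
  ∃ φ : ℂ → ℂ, ConformalBijOn φ unitDisc U ∧
    MapsTo g unitDisc unitDisc ∧ DifferentiableOn ℂ g unitDisc ∧
    ∀ z ∈ unitDisc, φ (g z) = f (φ z)

/-- `g : ℍ → ℍ` is dynamically associated to `f|_U` via a Riemann map `φ : ℍ → U`. -/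
def DynAssociatedH (f : ℂ → ℂ) (U : Set ℂ) (g : ℂ → ℂ) : Prop :=
  ∃ φ : ℂ → ℂ, ConformalBijOn φ upperHalf U ∧
    MapsTo g upperHalf upperHalf ∧ DifferentiableOn ℂ g upperHalf ∧
    ∀ z ∈ upperHalf, φ (g z) = f (φ z)

/-- The sequence of maps `F n` tends to infinity uniformly on compact subsets of `W`. -/
def UnifToInfOn (F : ℕ → ℂ → ℂ) (W : Set ℂ) : Prop :=
  ∀ K, K ⊆ W → IsCompact K → ∀ M : ℝ, ∀ᶠ n in atTop, ∀ z ∈ K, M ≤ ‖F n z‖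

/-- The family `F` is normal on `W`: every subsequence has a further subsequence that
converges locally uniformly on `W`, or diverges to infinity uniformly on compact sets. -/
def NormalOn (F : ℕ → ℂ → ℂ) (W : Set ℂ) : Prop :=
  ∀ s : ℕ → ℕ, StrictMono s → ∃ t : ℕ → ℕ, StrictMono t ∧
    ((∃ h : ℂ → ℂ, TendstoLocallyUniformlyOn (fun k => F (s (t k))) h atTop W) ∨
      UnifToInfOn (fun k => F (s (t k))) W)

/-- The Fatou set of an entire function. -/
def FatouSet (f : ℂ → ℂ) : Set ℂ :=
  {z | ∃ W : Set ℂ, IsOpen W ∧ z ∈ W ∧ NormalOn (fun n => f^[n]) W}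

/-- `U` is a Fatou component (connected component of the Fatou set) of `f`. -/
def IsFatouComponent (f : ℂ → ℂ) (U : Set ℂ) : Prop :=
  ∃ z ∈ FatouSet f, U = connectedComponentIn (FatouSet f) z

/-- The set of singular values of `f`: the closure of the set of critical values
together with the finite asymptotic values. -/
def SingularValues (f : ℂ → ℂ) : Set ℂ :=
  closure ({v | ∃ z : ℂ, deriv f z = 0 ∧ f z = v} ∪
    {v | ∃ γ : ℝ → ℂ, ContinuousOn γ (Set.Ici 0) ∧
      Tendsto (fun t => ‖γ t‖) atTop atTop ∧
      Tendsto (fun t => f (γ t)) atTop (nhds v)})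

/-- `ζ` is a singularity of the inner function `g`: a boundary point of the disc at which
`g` admits no holomorphic extension to a neighbourhood. -/
def IsBoundarySingularity (g : ℂ → ℂ) (ζ : ℂ) : Prop :=
  ζ ∈ Metric.sphere (0 : ℂ) 1 ∧
  ¬ ∃ (W : Set ℂ) (h : ℂ → ℂ), IsOpen W ∧ ζ ∈ W ∧ DifferentiableOn ℂ h W ∧
      Set.EqOn g h (W ∩ unitDisc)

/-- `C` is a connected component of the set `A`. -/
def IsCompOf (A C : Set ℂ) : Prop := ∃ z ∈ A, C = connectedComponentIn A z

/-- A Jordan domain: a bounded domain whose boundary is a Jordan curve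
(a homeomorphic copy of the circle). -/
def IsJordanDomain (D : Set ℂ) : Prop :=
  IsOpen D ∧ IsConnected D ∧ Bornology.IsBounded D ∧
  Nonempty (↥(Metric.sphere (0 : ℂ) 1) ≃ₜ ↥(frontier D))

/-- The multiplicity of `z` as a solution of `f w = f z`: the order of vanishing
of `f - f z` at `z` (as a value in `ℝ≥0∞`, `⊤` if `f` is locally constant). -/
def multAt (f : ℂ → ℂ) (z : ℂ) : ℝ≥0∞ :=
  sInf {x : ℝ≥0∞ | ∃ m : ℕ, x = m ∧ 1 ≤ m ∧ iteratedDeriv m f z ≠ 0}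

/-- The number of solutions of `f z = v` with `z ∈ U`, counted with multiplicity. -/
def ValenceAt (f : ℂ → ℂ) (U : Set ℂ) (v : ℂ) : ℝ≥0∞ :=
  ∑' z : ↥(U ∩ f ⁻¹' {v}), multAt f ↑z

/-- `f : U → V` has infinite valence: every value in `V`, with at most one exception,
has infinitely many preimages in `U`. -/
def InfValence (f : ℂ → ℂ) (U V : Set ℂ) : Prop :=
  ∃ E : Set ℂ, E.Subsingleton ∧ ∀ v ∈ V \ E, (U ∩ f ⁻¹' {v}).Infinite




/-- `U` is an invariant attracting Fatou component of `f`. -/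
def IsAttractingComponent (f : ℂ → ℂ) (U : Set ℂ) : Prop :=
  IsFatouComponent f U ∧ Set.MapsTo f U U ∧
  ∃ z₀ ∈ U, f z₀ = z₀ ∧ ‖deriv f z₀‖ < 1 ∧
    ∀ z ∈ U, Tendsto (fun n => f^[n] z) atTop (nhds z₀)

/-- `U` is an invariant super-attracting Fatou component of `f`. -/
def IsSuperAttractingComponent (f : ℂ → ℂ) (U : Set ℂ) : Prop :=
  IsFatouComponent f U ∧ Set.MapsTo f U U ∧
  ∃ z₀ ∈ U, f z₀ = z₀ ∧ deriv f z₀ = 0 ∧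
    ∀ z ∈ U, Tendsto (fun n => f^[n] z) atTop (nhds z₀)

/-- `U` is an invariant parabolic Fatou component of `f`. -/
def IsParabolicComponent (f : ℂ → ℂ) (U : Set ℂ) : Prop :=
  IsFatouComponent f U ∧ Set.MapsTo f U U ∧
  ∃ p ∈ frontier U, f p = p ∧ deriv f p = 1 ∧
    TendstoLocallyUniformlyOn (fun n => f^[n]) (fun _ => p) atTop U

/-- `U` is a wandering domain of `f`. -/
def IsWanderingDomain (f : ℂ → ℂ) (U : Set ℂ) : Prop :=
  IsFatouComponent f U ∧ ∀ m n : ℕ, m ≠ n → Disjoint (f^[m] '' U) (f^[n] '' U)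

/-- `f : U → V` is a proper map of degree `d`: preimages of compact sets are compact and
every value is assumed exactly `d` times counting multiplicity. -/
def ProperOfDegree (f : ℂ → ℂ) (U V : Set ℂ) (d : ℕ) : Prop :=
  Set.MapsTo f U V ∧ (∀ K, K ⊆ V → IsCompact K → IsCompact (U ∩ f ⁻¹' K)) ∧
  ∀ v ∈ V, ValenceAt f U v = (d : ℝ≥0∞)

/-- `g` has an attracting fixed point in the unit disc. -/
def HasAttractingFP (g : ℂ → ℂ) : Prop :=
  ∃ z₀ ∈ unitDisc, g z₀ = z₀ ∧ ‖deriv g z₀‖ < 1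

/-- `g` has a triple fixed point on the unit circle: a boundary point at which
`g z - z` has a zero of order exactly `3`. -/
def HasTripleFPOnCircle (g : ℂ → ℂ) : Prop :=
  ∃ ζ ∈ Metric.sphere (0 : ℂ) 1, g ζ = ζ ∧
    iteratedDeriv 1 (fun z => g z - z) ζ = 0 ∧
    iteratedDeriv 2 (fun z => g z - z) ζ = 0 ∧
    iteratedDeriv 3 (fun z => g z - z) ζ ≠ 0

/-- The map `g_{a,b}(z) = a·tan z + b` on the upper half-plane. -/
def gab (a b : ℝ) : ℂ → ℂ := fun z => (a : ℂ) * Complex.tan z + (b : ℂ)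

/-- A Möbius automorphism of the unit disc. -/
def MobiusDisc (m : ℂ → ℂ) : Prop :=
  ∃ (θ : ℝ) (a : ℂ), ‖a‖ < 1 ∧
    ∀ z ∈ unitDisc, m z = Complex.exp (θ * Complex.I) * (z - a) / (1 - (starRingEnd ℂ) a * z)

/-- A Möbius automorphism of the upper half-plane. -/
def MobiusH (ψ : ℂ → ℂ) : Prop :=
  ∃ p q r s : ℝ, 0 < p * s - q * r ∧
    ∀ z ∈ upperHalf, ψ z = ((p : ℂ) * z + (q : ℂ)) / ((r : ℂ) * z + (s : ℂ))

/-- The Cayley transform `ℍ → 𝔻`. -/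
def cayley (z : ℂ) : ℂ := (z - Complex.I) / (z + Complex.I)

/-- The inverse Cayley transform `𝔻 → ℍ`. -/
def cayleyInv (w : ℂ) : ℂ := Complex.I * (1 + w) / (1 - w)


/-- An inner function of the upper half-plane: a holomorphic self-map of `ℍ`
corresponding to an inner function of the disc under the Cayley transform. -/
def IsInnerH (g : ℂ → ℂ) : Prop :=
  Set.MapsTo g upperHalf upperHalf ∧ DifferentiableOn ℂ g upperHalf ∧
  IsInner (fun w => cayley (g (cayleyInv w)))

/-- Curves tending to infinity within `W`. -/
def CurveToInf (W : Set ℂ) : Type :=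
  {γ : ℝ → ℂ // ContinuousOn γ (Set.Ici 0) ∧ (∀ t ∈ Set.Ici (0 : ℝ), γ t ∈ W) ∧
    Tendsto (fun t => ‖γ t‖) atTop atTop}

/-- Two curves to infinity in `W` are homotopic through curves to infinity in `W`. -/
def accessRel (W : Set ℂ) (γ₀ γ₁ : CurveToInf W) : Prop :=
  ∃ H : ℝ → ℝ → ℂ,
    ContinuousOn (fun p : ℝ × ℝ => H p.1 p.2) (Set.Ici 0 ×ˢ Set.Icc 0 1) ∧
    (∀ t ∈ Set.Ici (0 : ℝ), ∀ s ∈ Set.Icc (0 : ℝ) 1, H t s ∈ W) ∧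
    (∀ t ∈ Set.Ici (0 : ℝ), H t 0 = γ₀.1 t ∧ H t 1 = γ₁.1 t) ∧
    (∀ s ∈ Set.Icc (0 : ℝ) 1, Tendsto (fun t => ‖H t s‖) atTop atTop)

/-- The accesses to infinity in `W`: homotopy classes of curves to infinity in `W`. -/
def Accesses (W : Set ℂ) := Quot (accessRel W)

/-- Quasisymmetric conjugacy on the unit circle: a quasisymmetric circle homeomorphism
`θ` (with lift `Θ`) with `θ ∘ g = g' ∘ θ` on the circle. -/
def QSConjOnCircle (g g' : ℂ → ℂ) : Prop :=
  ∃ (θ : ℂ → ℂ) (Θ : ℝ → ℝ) (M : ℝ), 1 ≤ M ∧ Continuous Θ ∧ StrictMono Θ ∧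
    (∀ t, Θ (t + 2 * Real.pi) = Θ t + 2 * Real.pi) ∧
    (∀ t : ℝ, θ (Complex.exp ((t : ℂ) * Complex.I)) = Complex.exp ((Θ t : ℂ) * Complex.I)) ∧
    (∀ t h : ℝ, 0 < h →
      Θ (t + h) - Θ t ≤ M * (Θ t - Θ (t - h)) ∧
      Θ t - Θ (t - h) ≤ M * (Θ (t + h) - Θ t)) ∧
    (∀ z ∈ Metric.sphere (0 : ℂ) 1, θ (g z) = g' (θ z))

/-- `g` restricted to `Dom` is an (unbranched) covering over every point of
`Dom` other than `s`. -/
def CoveringOverPuncture (g : ℂ → ℂ) (Dom : Set ℂ) (s : ℂ) : Prop :=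
  ∀ v ∈ Dom, v ≠ s → ∃ W : Set ℂ, IsOpen W ∧ v ∈ W ∧ W ⊆ Dom \ {s} ∧
    ∃ (ι : Type) (Ω : ι → Set ℂ), (∀ i, IsOpen (Ω i)) ∧
      (Pairwise fun i j => Disjoint (Ω i) (Ω j)) ∧
      (Dom ∩ g ⁻¹' W = ⋃ i, Ω i) ∧ ∀ i, Set.BijOn g (Ω i) W

/-- `g` has the single singular value `s` in `Dom`: `g` is a covering away from `s`. -/
def UniqueSingularValue (g : ℂ → ℂ) (Dom : Set ℂ) (s : ℂ) : Prop :=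
  s ∈ Dom ∧ CoveringOverPuncture g Dom s

/-- `g : Dom → Dom` has degree `d ∈ ℕ∞`: if `d` is finite, every value is taken exactly
`d` times with multiplicity; if `d = ∞`, every value with at most one exception has
infinitely many preimages. -/
def DegreeEq (g : ℂ → ℂ) (Dom : Set ℂ) (d : ℕ∞) : Prop :=
  (∃ n : ℕ, d = (n : ℕ∞) ∧ ∀ v ∈ Dom, ValenceAt g Dom v = (n : ℝ≥0∞)) ∨
  (d = ⊤ ∧ ∃ E : Set ℂ, E.Subsingleton ∧ ∀ v ∈ Dom \ E, (Dom ∩ g ⁻¹' {v}).Infinite)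

end

namespace St15

lemma sinh_lt_mul_cosh {t : ℝ} (ht : 0 < t) : Real.sinh t < t * Real.cosh t := by
  have hmono : StrictMonoOn (fun u : ℝ => u * Real.cosh u - Real.sinh u) (Set.Ici 0) := by
    apply strictMonoOn_of_deriv_pos (convex_Ici 0)
    · exact ((continuous_id.mul Real.continuous_cosh).sub Real.continuous_sinh).continuousOn
    · intro x hx
      rw [interior_Ici] at hx
      have hd : HasDerivAt (fun u : ℝ => u * Real.cosh u - Real.sinh u) (x * Real.sinh x) x := by
        have h1 : HasDerivAt (fun u : ℝ => u * Real.cosh u - Real.sinh u)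
            (1 * Real.cosh x + x * Real.sinh x - Real.cosh x) x :=
          ((hasDerivAt_id' x).mul (Real.hasDerivAt_cosh x)).sub (Real.hasDerivAt_sinh x)
        convert h1 using 1
        ring
      rw [hd.deriv]
      exact mul_pos hx (Real.sinh_pos_iff.mpr hx)
  have := hmono (Set.self_mem_Ici) (Set.mem_Ici.mpr ht.le) ht
  simp only [Real.sinh_zero, Real.cosh_zero] at this
  linarith

lemma two_sinh_lt {t : ℝ} (ht : 0 < t) : 2 * Real.sinh t < t * (Real.cosh t + 1) := by
  have h2 : Real.sinh t = 2 * Real.sinh (t/2) * Real.cosh (t/2) := by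
    rw [← Real.sinh_two_mul]; ring_nf
  have h3 : Real.cosh t = Real.cosh (t/2) ^ 2 + Real.sinh (t/2) ^ 2 := by
    rw [← Real.cosh_two_mul]; ring_nf
  have h4 := sinh_lt_mul_cosh (t := t/2) (by linarith)
  have h6 := Real.cosh_sq_sub_sinh_sq (t/2)
  nlinarith [Real.cosh_pos (t/2)]

lemma two_sin_mul_cos_le {h m : ℝ} (hh : 0 ≤ h) : 2 * Real.sin h * Real.cos m ≤ 2 * h := by
  have hc1 : Real.cos m ≤ 1 := Real.cos_le_one _
  have hc2 : -1 ≤ Real.cos m := Real.neg_one_le_cos _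
  rcases le_or_gt h 1 with hle | hgt
  · have hs0 : 0 ≤ Real.sin h := Real.sin_nonneg_of_nonneg_of_le_pi hh (by linarith [Real.pi_gt_three])
    have hs1 : Real.sin h ≤ h := Real.sin_le hh
    nlinarith
  · have hs1 : Real.sin h ≤ 1 := Real.sin_le_one _
    have hs2 : -1 ≤ Real.sin h := Real.neg_one_le_sin _
    nlinarith

lemma sin_sub_le {σ s : ℝ} (h : σ ≤ s) : Real.sin s - Real.sin σ ≤ s - σ := by
  rw [Real.sin_sub_sin]
  have := two_sin_mul_cos_le (h := (s - σ)/2) (m := (s + σ)/2) (by linarith)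
  linarith

lemma cos_ne_zero_of_im_ne {z : ℂ} (h : z.im ≠ 0) : Complex.cos z ≠ 0 := by
  intro h0
  rcases Complex.cos_eq_zero_iff.mp h0 with ⟨k, hk⟩
  apply h
  have : ((2 * (k:ℂ) + 1) * ↑Real.pi / 2) = (((2*(k:ℝ)+1) * Real.pi / 2 : ℝ) : ℂ) := by
    push_cast; ring
  rw [hk, this, Complex.ofReal_im]

lemma tan_sub_int_pi {u v : ℂ} (hu : Complex.cos u ≠ 0) (hv : Complex.cos v ≠ 0)
    (h : Complex.tan u = Complex.tan v) : ∃ k : ℤ, u - v = k * Real.pi := by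
  rw [Complex.tan_eq_sin_div_cos, Complex.tan_eq_sin_div_cos, div_eq_div_iff hu hv] at h
  have h2 : Complex.sin (u - v) = 0 := by rw [Complex.sin_sub]; linear_combination h
  rcases Complex.sin_eq_zero_iff.mp h2 with ⟨k, hk⟩
  exact ⟨k, hk⟩

lemma tan_exp_formula {z : ℂ} (h : Complex.exp (2*z*I) ≠ -1) :
    Complex.tan z = I * (1 - Complex.exp (2*z*I)) / (1 + Complex.exp (2*z*I)) := by
  have h2e : (2:ℂ) * Complex.exp (z*I) ≠ 0 := by
    simp [Complex.exp_ne_zero]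
  have huu : Complex.exp (z*I) * Complex.exp (z*I) = Complex.exp (2*z*I) := by
    rw [← Complex.exp_add]; ring_nf
  have hinv : Complex.exp (-(z*I)) * Complex.exp (z*I) = 1 := by
    rw [← Complex.exp_add]
    norm_num
  have hden : (1 : ℂ) + Complex.exp (2*z*I) ≠ 0 := by
    intro h0; apply h; linear_combination h0
  have hs : Complex.sin z * (2 * Complex.exp (z*I)) = (1 - Complex.exp (2*z*I)) * I := by
    rw [Complex.sin]
    simp only [neg_mul]
    linear_combination I*hinv - I*huu
  have hc : Complex.cos z * (2 * Complex.exp (z*I)) = 1 + Complex.exp (2*z*I) := by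
    rw [Complex.cos]
    simp only [neg_mul]
    linear_combination huu + hinv
  have hcos : Complex.cos z ≠ 0 := by
    intro h0
    rw [h0, zero_mul] at hc
    exact hden hc.symm
  rw [Complex.tan_eq_sin_div_cos, div_eq_div_iff hcos hden]
  apply mul_left_cancel₀ h2e
  linear_combination (1 + Complex.exp (2*z*I))*hs - (I*(1 - Complex.exp (2*z*I)))*hc



lemma abs_exp_two_lt {z : ℂ} (h : 0 < z.im) : ‖Complex.exp (2*z*I)‖ < 1 := by
  rw [Complex.norm_exp]
  have : (2*z*I).re = -(2*z.im) := by simp [Complex.mul_re]; try ring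
  rw [this]
  rw [Real.exp_lt_one_iff]
  linarith

lemma exp_two_ne_neg_one {z : ℂ} (h : 0 < z.im) : Complex.exp (2*z*I) ≠ -1 := by
  intro h0
  have := abs_exp_two_lt h
  rw [h0] at this
  simp at this

lemma tan_im_pos {z : ℂ} (h : 0 < z.im) : 0 < (Complex.tan z).im := by
  have hne := exp_two_ne_neg_one h
  rw [tan_exp_formula hne]
  set E := Complex.exp (2*z*I) with hE
  have habs : Complex.normSq E < 1 := by
    have := abs_exp_two_lt h
    rw [← Complex.sq_norm]
    nlinarith [norm_nonneg E]
  have hden : (1:ℂ) + E ≠ 0 := by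
    intro h0; exact hne (by linear_combination h0)
  have hnsq : 0 < Complex.normSq (1+E) := by
    rwa [Complex.normSq_pos]
  rw [div_im]
  have h1 : (I * (1 - E)).im = 1 - E.re := by simp
  have h2 : (I * (1 - E)).re = E.im := by simp
  rw [h1, h2]
  have h3 : (1+E).re = 1 + E.re := by simp
  have h4 : (1+E).im = E.im := by simp
  rw [h3, h4]
  rw [div_sub_div_same, lt_div_iff₀ hnsq]
  have h5 : Complex.normSq (1+E) = 1 + 2*E.re + Complex.normSq E := by
    simp [Complex.normSq_apply]; ring
  rw [Complex.normSq_apply] at habs h5 ⊢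
  nlinarith

lemma tendsto_tan_vert (c t : ℝ) (ht : 0 < t) :
    Tendsto (fun y : ℝ => Complex.tan ((c:ℂ) + (t*y : ℝ)*I)) atTop (𝓝 I) := by
  have hexp : ∀ y : ℝ, Complex.exp (2*((c:ℂ) + (t*y:ℝ)*I)*I)
      = Complex.exp (2*(c:ℂ)*I) * ((Real.exp (-(2*t*y)) : ℝ) : ℂ) := by
    intro y
    rw [Complex.ofReal_exp, ← Complex.exp_add]
    congr 1
    push_cast
    ring_nf
    rw [Complex.I_sq]
    ring
  have h0 : Tendsto (fun y : ℝ => Complex.exp (2*((c:ℂ) + (t*y:ℝ)*I)*I)) atTop (𝓝 0) := by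
    simp only [hexp]
    rw [show (0:ℂ) = Complex.exp (2*(c:ℂ)*I) * ((0:ℝ):ℂ) by simp]
    apply Tendsto.const_mul
    apply (Complex.continuous_ofReal.tendsto 0).comp
    apply Real.tendsto_exp_atBot.comp
    apply tendsto_neg_atTop_atBot.comp
    exact Tendsto.const_mul_atTop (by linarith) tendsto_id
  have hlim : Tendsto (fun y : ℝ => I * (1 - Complex.exp (2*((c:ℂ) + (t*y:ℝ)*I)*I))
      / (1 + Complex.exp (2*((c:ℂ) + (t*y:ℝ)*I)*I))) atTop (𝓝 I) := by
    have := (tendsto_const_nhds (x := I) (f := atTop (α := ℝ))).mul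
      ((tendsto_const_nhds (x := (1:ℂ))).sub h0)
    have hq := this.div ((tendsto_const_nhds (x := (1:ℂ))).add h0) (by norm_num)
    rw [show I * (1 - 0) / (1 + 0) = I by simp] at hq
    exact hq
  apply hlim.congr'
  filter_upwards [eventually_gt_atTop 0] with y hy
  have him : ((c:ℂ) + (t*y:ℝ)*I).im = t*y := by simp
  have hpos : 0 < ((c:ℂ) + (t*y:ℝ)*I).im := by rw [him]; positivity
  rw [tan_exp_formula (exp_two_ne_neg_one hpos)]

lemma sin_decomp (x y : ℝ) : Complex.sin ((x:ℂ) + (y:ℂ)*I)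
    = ((Real.sin x * Real.cosh y : ℝ) : ℂ) + ((Real.cos x * Real.sinh y : ℝ) : ℂ) * I := by
  rw [Complex.sin_add, Complex.sin_mul_I, Complex.cos_mul_I]
  push_cast
  ring

lemma cos_decomp (x y : ℝ) : Complex.cos ((x:ℂ) + (y:ℂ)*I)
    = ((Real.cos x * Real.cosh y : ℝ) : ℂ) - ((Real.sin x * Real.sinh y : ℝ) : ℂ) * I := by
  rw [Complex.cos_add, Complex.sin_mul_I, Complex.cos_mul_I]
  push_cast
  ring



lemma fixedpoint_equations {a b x y : ℝ} (hy : 0 < y)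
    (h : gab a b ((x:ℂ) + (y:ℂ)*I) = (x:ℂ) + (y:ℂ)*I) :
    a * Real.sinh y * Real.cosh y
      = y * (Real.cos x ^ 2 * Real.cosh y ^ 2 + Real.sin x ^ 2 * Real.sinh y ^ 2) ∧
    a * Real.sin x * Real.cos x
      = (x - b) * (Real.cos x ^ 2 * Real.cosh y ^ 2 + Real.sin x ^ 2 * Real.sinh y ^ 2) := by
  have him : ((x:ℂ) + (y:ℂ)*I).im = y := by simp
  have hcos : Complex.cos ((x:ℂ) + (y:ℂ)*I) ≠ 0 := by
    apply cos_ne_zero_of_im_ne; rw [him]; exact ne_of_gt hy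
  rw [gab, Complex.tan_eq_sin_div_cos] at h
  have hsc : (a:ℂ) * Complex.sin ((x:ℂ) + (y:ℂ)*I)
      = (((x - b : ℝ):ℂ) + (y:ℂ)*I) * Complex.cos ((x:ℂ) + (y:ℂ)*I) := by
    field_simp at h
    push_cast
    linear_combination h
  rw [sin_decomp, cos_decomp] at hsc
  have h1 := congrArg Complex.re hsc
  have h2 := congrArg Complex.im hsc
  simp only [Complex.mul_re, Complex.mul_im, Complex.add_re, Complex.add_im, Complex.sub_re,
    Complex.sub_im, Complex.ofReal_re, Complex.ofReal_im, Complex.I_re, Complex.I_im] at h1 h2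
  ring_nf at h1 h2
  have hp := Real.sin_sq_add_cos_sq x
  have hh := Real.cosh_sq_sub_sinh_sq y
  constructor
  · linear_combination (Real.cos x*Real.cosh y)*h2 + (Real.sin x*Real.sinh y)*h1
      - (a*Real.sinh y*Real.cosh y)*hp
  · linear_combination (Real.cos x*Real.cosh y)*h1 - (Real.sin x*Real.sinh y)*h2
      - (a*Real.sin x*Real.cos x)*hh

lemma exists_fixed_point {a b x y : ℝ} (ha : 0 < a) (hy : 0 < y)
    (h1 : a * Real.sinh y * Real.cosh y
      = y * (Real.cos x ^ 2 * Real.cosh y ^ 2 + Real.sin x ^ 2 * Real.sinh y ^ 2))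
    (h2 : a * Real.sin x * Real.cos x
      = (x - b) * (Real.cos x ^ 2 * Real.cosh y ^ 2 + Real.sin x ^ 2 * Real.sinh y ^ 2)) :
    ∃ w ∈ upperHalf, gab a b w = w ∧ ‖deriv (gab a b) w‖ < 1 := by
  set p := Real.sin x
  set c := Real.cos x
  set S := Real.sinh y
  set C := Real.cosh y
  have hp : p^2 + c^2 = 1 := Real.sin_sq_add_cos_sq x
  have hh : C^2 - S^2 = 1 := Real.cosh_sq_sub_sinh_sq y
  have hS : 0 < S := Real.sinh_pos_iff.mpr hy
  have hC : 1 ≤ C := Real.one_le_cosh y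
  have hD : 0 < c^2*C^2 + p^2*S^2 := by nlinarith
  set w : ℂ := (x:ℂ) + (y:ℂ)*I with hw
  have him : w.im = y := by simp [hw]
  have hcos : Complex.cos w ≠ 0 := by
    apply cos_ne_zero_of_im_ne; rw [him]; exact ne_of_gt hy
  have hRe : a * p * C - ((x - b) * (c*C) + y * (p*S)) = 0 := by
    have e1 : (c^2*C^2 + p^2*S^2) * (a * p * C - ((x - b) * (c*C) + y * (p*S))) = 0 := by
      linear_combination (p*S)*h1 + (c*C)*h2 + (a*p*C*c^2)*hh + (a*C*p*S^2)*hp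
    rcases mul_eq_zero.mp e1 with h' | h'
    · exact absurd h' (ne_of_gt hD)
    · exact h'
  have hIm : a * c * S - (-((x - b) * (p*S)) + y * (c*C)) = 0 := by
    have e1 : (c^2*C^2 + p^2*S^2) * (a * c * S - (-((x - b) * (p*S)) + y * (c*C))) = 0 := by
      linear_combination (c*C)*h1 - (p*S)*h2 - (a*c*S*p^2)*hh + (a*c*C^2*S)*hp
    rcases mul_eq_zero.mp e1 with h' | h'
    · exact absurd h' (ne_of_gt hD)
    · exact h'
  have hsub : w - (b:ℂ) = (((x - b : ℝ)):ℂ) + (y:ℂ)*I := by rw [hw]; push_cast; ring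
  have hsc : (a:ℂ) * Complex.sin w = (w - (b:ℂ)) * Complex.cos w := by
    rw [hsub, hw, sin_decomp, cos_decomp]
    apply Complex.ext
    · simp only [Complex.mul_re, Complex.mul_im, Complex.add_re, Complex.add_im, Complex.sub_re,
        Complex.sub_im, Complex.ofReal_re, Complex.ofReal_im, Complex.I_re, Complex.I_im]
      ring_nf
      ring_nf at hRe
      linarith [hRe]
    · simp only [Complex.mul_re, Complex.mul_im, Complex.add_re, Complex.add_im, Complex.sub_re,
        Complex.sub_im, Complex.ofReal_re, Complex.ofReal_im, Complex.I_re, Complex.I_im]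
      ring_nf
      ring_nf at hIm
      linarith [hIm]
  have hfix : gab a b w = w := by
    show (a:ℂ) * Complex.tan w + (b:ℂ) = w
    rw [Complex.tan_eq_sin_div_cos]
    field_simp
    linear_combination hsc
  have hderiv : HasDerivAt (gab a b) ((a:ℂ) * (1/Complex.cos w^2)) w := by
    have ht := Complex.hasDerivAt_tan hcos
    exact (ht.const_mul (a:ℂ)).add_const (b:ℂ)
  refine ⟨w, ?_, hfix, ?_⟩
  · show 0 < w.im
    rw [him]; exact hy
  · rw [hderiv.deriv]
    have habs : ‖(a:ℂ) * (1/Complex.cos w^2)‖ = a / ‖Complex.cos w‖^2 := by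
      rw [norm_mul, norm_div, norm_one, norm_pow, Complex.norm_of_nonneg ha.le]
      ring
    rw [habs]
    have hnsq : ‖Complex.cos w‖^2 = c^2*C^2 + p^2*S^2 := by
      rw [Complex.sq_norm, hw, cos_decomp]
      have : ((c*C : ℝ):ℂ) - ((p*S:ℝ):ℂ)*I = ((c*C : ℝ):ℂ) + ((-(p*S):ℝ):ℂ)*I := by push_cast; ring
      rw [this, Complex.normSq_add_mul_I]
      ring
    rw [hnsq, div_lt_one hD]
    -- a < D = a*S*C/y, since y < S*C
    have hy2 : y < S*C := by
      have := Real.self_lt_sinh_iff.mpr hy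
      nlinarith
    have : a*y < a*(S*C) := by nlinarith
    nlinarith

lemma key_pos {a b x y : ℝ} (ha0 : 0 < a) (ha : a ≤ 1) (hy : 0 < y) (hx : 0 < x)
    (h1 : a * Real.sinh y * Real.cosh y
      = y * (Real.cos x ^ 2 * Real.cosh y ^ 2 + Real.sin x ^ 2 * Real.sinh y ^ 2))
    (h2 : a * Real.sin x * Real.cos x
      = (x - b) * (Real.cos x ^ 2 * Real.cosh y ^ 2 + Real.sin x ^ 2 * Real.sinh y ^ 2)) :
    Real.arccos (Real.sqrt a) - Real.sqrt a * Real.sqrt (1-a) < b := by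
  set p := Real.sin x with hpdef
  set c := Real.cos x with hcdef
  set S := Real.sinh y with hSdef
  set C := Real.cosh y with hCdef
  have hp : p^2 + c^2 = 1 := Real.sin_sq_add_cos_sq x
  have hh : C^2 - S^2 = 1 := Real.cosh_sq_sub_sinh_sq y
  have hS : 0 < S := Real.sinh_pos_iff.mpr hy
  have hC : 1 ≤ C := Real.one_le_cosh y
  have hSCy : y < S*C := by nlinarith [Real.self_lt_sinh_iff.mpr hy]
  have hSC : 0 < S*C := by nlinarith
  set u := Real.arccos (Real.sqrt a) with hudef
  have hcu : Real.cos u = Real.sqrt a :=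
    Real.cos_arccos (le_trans (by norm_num) (Real.sqrt_nonneg a)) (Real.sqrt_le_one.mpr ha)
  have hsu : Real.sin u = Real.sqrt (1-a) := by
    rw [hudef, Real.sin_arccos, Real.sq_sqrt ha0.le]
  have hu0 : 0 ≤ u := Real.arccos_nonneg _
  have huh : u < Real.pi/2 := by
    rw [hudef, Real.arccos_lt_pi_div_two]
    positivity
  set σ := 2*u with hσdef
  have hσπ : σ < Real.pi := by rw [hσdef]; linarith
  have hσ0 : 0 ≤ σ := by rw [hσdef]; linarith
  have hcσ : Real.cos σ = 2*a - 1 := by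
    rw [hσdef, Real.cos_two_mul, hcu, Real.sq_sqrt ha0.le]
  have hsσ : Real.sin σ = 2*Real.sqrt (1-a)*Real.sqrt a := by
    rw [hσdef, Real.sin_two_mul, hsu, hcu]
    try ring
  -- cos 2x < 2a - 1
  have hc2 : c^2 < a := by
    have hDid : c^2*C^2 + p^2*S^2 = c^2 + S^2 := by linear_combination c^2*hh + S^2*hp
    rw [hDid] at h1
    nlinarith [sinh_lt_mul_cosh hy]
  have hcos2x : Real.cos (2*x) < 2*a - 1 := by
    rw [Real.cos_two_mul]
    nlinarith
  -- σ ≤ 2x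
  have hσ2x : σ ≤ 2*x := by
    rcases le_or_gt (2*x) Real.pi with hle | hgt
    · by_contra hcon
      push_neg at hcon
      have := Real.cos_lt_cos_of_nonneg_of_le_pi (by linarith) (le_of_lt hσπ) hcon
      rw [hcσ] at this
      linarith
    · linarith
  -- b relation
  have hxb : (x - b)*(S*C) = y*(p*c) := by
    apply mul_left_cancel₀ (ne_of_gt ha0)
    linear_combination (x-b)*h1 - y*h2
  have hb' : 2*b*(S*C) = 2*x*(S*C) - y*(Real.sin (2*x)) := by
    rw [Real.sin_two_mul]
    linear_combination (-2)*hxb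
  have hsinsub : Real.sin (2*x) - Real.sin σ ≤ 2*x - σ := sin_sub_le hσ2x
  have hpos : 0 < 2*x - σ + Real.sin σ := by
    rcases eq_or_lt_of_le hσ0 with h0 | h0
    · rw [← h0]
      simp
      linarith
    · have : 0 < Real.sin σ := Real.sin_pos_of_pos_of_lt_pi h0 hσπ
      linarith
  have hprod : 0 < (S*C - y) * (2*x - σ + Real.sin σ) := mul_pos (by linarith) hpos
  have hys : y*(Real.sin (2*x)) - y*(Real.sin σ) ≤ y*(2*x) - y*σ := by
    have h' := mul_le_mul_of_nonneg_left hsinsub hy.le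
    rw [mul_sub, mul_sub] at h'
    exact h'
  have hid : 2*b*(S*C) - (σ - Real.sin σ)*(S*C)
      = (S*C - y)*(2*x - σ + Real.sin σ)
        + ((y*(2*x) - y*σ) - (y*(Real.sin (2*x)) - y*(Real.sin σ))) := by
    linear_combination hb'
  have hgt : 0 < 2*b*(S*C) - (σ - Real.sin σ)*(S*C) := by
    rw [hid]; linarith [hprod, hys]
  have hfin : σ - Real.sin σ < 2*b := by
    by_contra hcon
    push_neg at hcon
    have := mul_le_mul_of_nonneg_right hcon (le_of_lt hSC)
    linarith
  have : σ - Real.sin σ = 2*(Real.arccos (Real.sqrt a) - Real.sqrt a * Real.sqrt (1-a)) := by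
    rw [hsσ, hσdef]; ring
  linarith [this ▸ hfin]

lemma forward_ineq {a b x y : ℝ} (ha0 : 0 < a) (ha : a ≤ 1) (hy : 0 < y)
    (h1 : a * Real.sinh y * Real.cosh y
      = y * (Real.cos x ^ 2 * Real.cosh y ^ 2 + Real.sin x ^ 2 * Real.sinh y ^ 2))
    (h2 : a * Real.sin x * Real.cos x
      = (x - b) * (Real.cos x ^ 2 * Real.cosh y ^ 2 + Real.sin x ^ 2 * Real.sinh y ^ 2)) :
    Real.arccos (Real.sqrt a) - Real.sqrt a * Real.sqrt (1-a) < |b| := by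
  rcases lt_trichotomy x 0 with hx | hx | hx
  · have h1' : a * Real.sinh y * Real.cosh y
        = y * (Real.cos (-x) ^ 2 * Real.cosh y ^ 2 + Real.sin (-x) ^ 2 * Real.sinh y ^ 2) := by
      rw [Real.cos_neg, Real.sin_neg]
      linear_combination h1
    have h2' : a * Real.sin (-x) * Real.cos (-x)
        = ((-x) - (-b)) * (Real.cos (-x) ^ 2 * Real.cosh y ^ 2 + Real.sin (-x) ^ 2 * Real.sinh y ^ 2) := by
      rw [Real.cos_neg, Real.sin_neg]
      linear_combination -h2
    have := key_pos ha0 ha hy (by linarith) h1' h2'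
    calc Real.arccos (Real.sqrt a) - Real.sqrt a * Real.sqrt (1-a) < -b := this
    _ ≤ |b| := neg_le_abs b
  · exfalso
    rw [hx] at h1
    simp only [Real.sin_zero, Real.cos_zero] at h1
    have hS : 0 < Real.sinh y := Real.sinh_pos_iff.mpr hy
    have hC : 0 < Real.cosh y := Real.cosh_pos y
    nlinarith [sinh_lt_mul_cosh hy, mul_pos hS hC,
      mul_lt_mul_of_pos_right (sinh_lt_mul_cosh hy) hC,
      mul_nonneg (sub_nonneg.mpr ha) (le_of_lt (mul_pos hS hC))]
  · have := key_pos ha0 ha hy hx h1 h2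
    calc Real.arccos (Real.sqrt a) - Real.sqrt a * Real.sqrt (1-a) < b := this
    _ ≤ |b| := le_abs_self b

lemma tendsto_sinh_div : Tendsto (fun t : ℝ => Real.sinh t / t) (𝓝[>] (0:ℝ)) (𝓝 1) := by
  have h := hasDerivAt_iff_tendsto_slope.mp (Real.hasDerivAt_sinh 0)
  rw [Real.cosh_zero] at h
  have h2 := h.mono_left (nhdsWithin_mono 0 (fun x hx => (by simp; exact ne_of_gt hx : x ∈ {(0:ℝ)}ᶜ)))
  apply h2.congr
  intro t
  simp [slope_def_field, Real.sinh_zero]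

lemma tendsto_div_sinh : Tendsto (fun t : ℝ => t / Real.sinh t) (𝓝[>] (0:ℝ)) (𝓝 1) := by
  have h := tendsto_sinh_div.inv₀ (one_ne_zero)
  simp only [inv_div, inv_one] at h
  exact h

lemma Tnonneg {a : ℝ} (ha : 0 < a) (ha1 : a ≤ 1) :
    0 ≤ Real.arccos (Real.sqrt a) - Real.sqrt a * Real.sqrt (1-a) := by
  set u := Real.arccos (Real.sqrt a) with hu
  have hcu : Real.cos u = Real.sqrt a :=
    Real.cos_arccos (le_trans (by norm_num) (Real.sqrt_nonneg a)) (Real.sqrt_le_one.mpr ha1)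
  have hsu : Real.sin u = Real.sqrt (1-a) := by
    rw [hu, Real.sin_arccos, Real.sq_sqrt ha.le]
  have hu0 : 0 ≤ u := Real.arccos_nonneg _
  have h2 : Real.sin u ≤ u := Real.sin_le hu0
  have hsn : 0 ≤ Real.sin u := by rw [hsu]; positivity
  nlinarith [Real.cos_le_one u]

lemma cos_arccos_max {r β lv : ℝ} (hβpos : 0 < β) (hβlt : β < Real.pi/2)
    (hB : (Real.arccos (max r (-1)) - lv*Real.sin (Real.arccos (max r (-1))))/2 = β) :
    Real.cos (Real.arccos (max r (-1))) = r := by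
  have hs0 : Real.arccos (max r (-1)) ≠ 0 := by
    intro h0; rw [h0] at hB; simp at hB; linarith
  have hsπ : Real.arccos (max r (-1)) ≠ Real.pi := by
    intro h0; rw [h0] at hB; simp [Real.sin_pi] at hB; linarith
  have h1 : max r (-1) < 1 := by
    by_contra hcon; push_neg at hcon
    exact hs0 (Real.arccos_eq_zero.mpr hcon)
  have h2 : -1 < max r (-1) := by
    by_contra hcon; push_neg at hcon
    exact hsπ (Real.arccos_eq_pi.mpr hcon)
  have hm1 : -1 ≤ r := by
    by_contra hcon; push_neg at hcon
    rw [max_eq_right hcon.le] at h2; linarith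
  rw [max_eq_left hm1] at h1 ⊢
  exact Real.cos_arccos hm1 h1.le

lemma assemble {a β t sv : ℝ} (ht : 0 < t)
    (hcs : Real.cos sv = 2*a*Real.sinh t/t - Real.cosh t)
    (hB : (sv - (t/Real.sinh t) * Real.sin sv)/2 = β) :
    ∃ x y : ℝ, 0 < y
      ∧ a * Real.sinh y * Real.cosh y
        = y * (Real.cos x ^ 2 * Real.cosh y ^ 2 + Real.sin x ^ 2 * Real.sinh y ^ 2)
      ∧ a * Real.sin x * Real.cos x
        = (x - β) * (Real.cos x ^ 2 * Real.cosh y ^ 2 + Real.sin x ^ 2 * Real.sinh y ^ 2) := by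
  set p := Real.sin (sv/2) with hpd
  set c := Real.cos (sv/2) with hcd
  set S := Real.sinh (t/2) with hSd
  set C := Real.cosh (t/2) with hCd
  have hp : p^2 + c^2 = 1 := Real.sin_sq_add_cos_sq _
  have hh : C^2 - S^2 = 1 := Real.cosh_sq_sub_sinh_sq _
  have hS : 0 < S := Real.sinh_pos_iff.mpr (by linarith)
  have hC : 1 ≤ C := Real.one_le_cosh _
  have hc2 : Real.cos sv = 2*c^2 - 1 := by
    have := Real.cos_two_mul (sv/2)
    rw [show 2*(sv/2) = sv by ring] at this
    exact this
  have hs2 : Real.sin sv = 2*p*c := by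
    have := Real.sin_two_mul (sv/2)
    rw [show 2*(sv/2) = sv by ring] at this
    exact this.trans (by ring)
  have hsh2 : Real.sinh t = 2*S*C := by
    have := Real.sinh_two_mul (t/2)
    rw [show 2*(t/2) = t by ring] at this
    exact this.trans (by ring)
  have hch2 : Real.cosh t = C^2 + S^2 := by
    have := Real.cosh_two_mul (t/2)
    rw [show 2*(t/2) = t by ring] at this
    exact this
  have htne : t ≠ 0 := ne_of_gt ht
  have hSCne : S*C ≠ 0 := by positivity
  rw [hc2, hsh2, hch2] at hcs
  rw [div_sub' htne, eq_div_iff htne] at hcs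
  rw [hs2, hsh2] at hB
  have hB2 : sv*(S*C) - t*(p*c) = 2*β*(S*C) := by
    field_simp at hB
    linear_combination hB
  have H1 : a * S * C = (t/2) * (c ^ 2 * C ^ 2 + p ^ 2 * S ^ 2) := by
    linear_combination (-1/4)*hcs + (t/4)*hh - (t/2)*c^2*hh - (t/2)*S^2*hp
  have H2 : a * p * c = (sv/2 - β) * (c ^ 2 * C ^ 2 + p ^ 2 * S ^ 2) := by
    apply mul_left_cancel₀ (show (2*(S*C)) ≠ 0 by simpa using hSCne)
    linear_combination 2*p*c*H1 - (c^2*C^2+p^2*S^2)*hB2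
  exact ⟨sv/2, t/2, by linarith, H1, H2⟩

lemma construct {a β : ℝ} (ha : 0 < a) (hβ0 : 0 ≤ β) (hβπ : β ≤ Real.pi/2)
    (hcond : 1 < a ∨ (a ≤ 1 ∧ Real.arccos (Real.sqrt a) - Real.sqrt a * Real.sqrt (1-a) < β)) :
    ∃ x y : ℝ, 0 < y
      ∧ a * Real.sinh y * Real.cosh y
        = y * (Real.cos x ^ 2 * Real.cosh y ^ 2 + Real.sin x ^ 2 * Real.sinh y ^ 2)
      ∧ a * Real.sin x * Real.cos x
        = (x - β) * (Real.cos x ^ 2 * Real.cosh y ^ 2 + Real.sin x ^ 2 * Real.sinh y ^ 2) := by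
  set R : ℝ → ℝ := fun t => 2*a*Real.sinh t/t - Real.cosh t with hRdef
  set B : ℝ → ℝ := fun t => (Real.arccos (max (R t) (-1))
      - (t/Real.sinh t) * Real.sin (Real.arccos (max (R t) (-1))))/2 with hBdef
  have hRcont : ContinuousOn R (Set.Ioi 0) := by
    apply ContinuousOn.sub
    · exact ContinuousOn.div (continuous_const.mul Real.continuous_sinh).continuousOn
        continuousOn_id (fun t ht => ne_of_gt ht)
    · exact Real.continuous_cosh.continuousOn
  have harccont : ContinuousOn (fun t => Real.arccos (max (R t) (-1))) (Set.Ioi 0) :=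
    Real.continuous_arccos.comp_continuousOn (fun x hx => (hRcont x hx).max continuousWithinAt_const)
  have hBcont : ContinuousOn B (Set.Ioi 0) := by
    apply ContinuousOn.div_const
    apply ContinuousOn.sub harccont
    apply ContinuousOn.mul
    · exact ContinuousOn.div continuousOn_id Real.continuous_sinh.continuousOn
        (fun t ht => ne_of_gt (Real.sinh_pos_iff.mpr ht))
    · exact Real.continuous_sin.comp_continuousOn harccont
  have h2a1 : (0:ℝ) < 2*a+1 := by linarith
  have ht1' : R (2*a+1) < -1 := by
    have hst := Real.sinh_lt_cosh (2*a+1)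
    have hts := Real.self_lt_sinh_iff.mpr h2a1
    have key : 2*a*Real.sinh (2*a+1) < (2*a+1)*(Real.cosh (2*a+1) - 1) := by
      nlinarith [mul_pos ha (sub_pos.mpr hst)]
    rw [hRdef]
    simp only
    rw [div_sub' (ne_of_gt h2a1), div_lt_iff₀ h2a1]
    nlinarith
  have hRlim : Tendsto R (𝓝[>] (0:ℝ)) (𝓝 (2*a-1)) := by
    have h1 : Tendsto (fun t : ℝ => 2*a*(Real.sinh t/t)) (𝓝[>] (0:ℝ)) (𝓝 (2*a*1)) :=
      tendsto_const_nhds.mul tendsto_sinh_div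
    have h2 : Tendsto (fun t : ℝ => Real.cosh t) (𝓝[>] (0:ℝ)) (𝓝 1) := by
      have := (Real.continuous_cosh.tendsto 0).mono_left (nhdsWithin_le_nhds (s := Set.Ioi (0:ℝ)))
      rwa [Real.cosh_zero] at this
    have h3 := h1.sub h2
    rw [show 2*a*1 - 1 = 2*a-1 by ring] at h3
    apply h3.congr
    intro t
    rw [hRdef]
    simp only
    ring
  have hevsmall : ∀ᶠ t in 𝓝[>] (0:ℝ), t < 2*a+1 ∧ 0 < t := by
    have h1 : ∀ᶠ t in 𝓝[>] (0:ℝ), t < 2*a+1 :=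
      eventually_nhdsWithin_of_eventually_nhds (eventually_lt_nhds h2a1)
    have h2 : ∀ᶠ t in 𝓝[>] (0:ℝ), 0 < t := eventually_mem_nhdsWithin
    exact h1.and h2
  rcases hcond with hagt | ⟨hale, hT⟩
  · -- case a > 1
    have hev : ∀ᶠ t in 𝓝[>] (0:ℝ), 1 < R t :=
      hRlim.eventually_const_lt (by linarith)
    obtain ⟨t₀, hRt₀, ht₀lt, ht₀pos⟩ := (hev.and hevsmall).exists
    have hIcc1 : Set.Icc t₀ (2*a+1) ⊆ Set.Ioi 0 := fun t htm => lt_of_lt_of_le ht₀pos htm.1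
    obtain ⟨τ, hτmem, hτ⟩ := intermediate_value_Icc' ht₀lt.le (hRcont.mono hIcc1)
      (Set.mem_Icc.mpr ⟨ht1'.le, by linarith⟩)
    have hτpos : 0 < τ := hIcc1 hτmem
    have hIcc2 : Set.Icc t₀ τ ⊆ Set.Ioi 0 := fun t htm => lt_of_lt_of_le ht₀pos htm.1
    obtain ⟨ta, htamem, hta⟩ := intermediate_value_Icc' hτmem.1 (hRcont.mono hIcc2)
      (Set.mem_Icc.mpr ⟨by rw [hτ]; norm_num, hRt₀.le⟩)
    have htapos : 0 < ta := hIcc2 htamem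
    rcases eq_or_lt_of_le hβπ with hβeq | hβlt
    · -- β = π/2 : use τ with sv = π
      apply assemble hτpos (sv := Real.pi)
      · rw [Real.cos_pi, ← hτ]
      · rw [Real.sin_pi, hβeq]; ring
    rcases eq_or_lt_of_le hβ0 with hβeq0 | hβpos
    · -- β = 0 : use ta with sv = 0
      apply assemble htapos (sv := 0)
      · rw [Real.cos_zero, ← hta]
      · rw [Real.sin_zero, ← hβeq0]; ring
    -- 0 < β < π/2 : IVT for B on [ta, τ]
    have hBta : B ta = 0 := by
      rw [hBdef]
      simp only
      rw [hta]
      rw [max_eq_left (by norm_num : (-1:ℝ) ≤ 1), Real.arccos_one, Real.sin_zero]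
      ring
    have hBτ : B τ = Real.pi/2 := by
      rw [hBdef]
      simp only
      rw [hτ, max_self, Real.arccos_neg_one, Real.sin_pi]
      ring
    have hIcc3 : Set.Icc ta τ ⊆ Set.Ioi 0 := fun t htm => lt_of_lt_of_le htapos htm.1
    obtain ⟨t', ht'mem, hBt'⟩ := intermediate_value_Icc htamem.2 (hBcont.mono hIcc3)
      (show β ∈ Set.Icc (B ta) (B τ) from ⟨hBta ▸ hβ0, hBτ ▸ hβπ⟩)
    have ht'pos : 0 < t' := hIcc3 ht'mem
    have hcs := cos_arccos_max hβpos hβlt hBt'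
    exact assemble ht'pos hcs hBt'
  · -- case a ≤ 1
    have hβpos : 0 < β := lt_of_le_of_lt (Tnonneg ha hale) hT
    -- limit of B at 0+
    have hu2 : Real.arccos (2*a-1) = 2*Real.arccos (Real.sqrt a) := by
      have hcu : Real.cos (Real.arccos (Real.sqrt a)) = Real.sqrt a :=
        Real.cos_arccos (le_trans (by norm_num) (Real.sqrt_nonneg a)) (Real.sqrt_le_one.mpr hale)
      have hval : Real.cos (2*Real.arccos (Real.sqrt a)) = 2*a-1 := by
        rw [Real.cos_two_mul, hcu, Real.sq_sqrt ha.le]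
      rw [← hval, Real.arccos_cos (by linarith [Real.arccos_nonneg (Real.sqrt a)]) ?hle]
      case hle =>
        have := Real.arccos_le_pi_div_two.mpr (Real.sqrt_nonneg a)
        linarith
    have hsσ : Real.sin (Real.arccos (2*a-1)) = 2*Real.sqrt (1-a)*Real.sqrt a := by
      rw [hu2, Real.sin_two_mul]
      rw [Real.sin_arccos, Real.sq_sqrt ha.le,
        Real.cos_arccos (le_trans (by norm_num) (Real.sqrt_nonneg a)) (Real.sqrt_le_one.mpr hale)]
      try ring
    have hmaxlim : Tendsto (fun t => max (R t) (-1)) (𝓝[>] (0:ℝ)) (𝓝 (2*a-1)) := by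
      have := hRlim.max (tendsto_const_nhds (x := (-1:ℝ)))
      rwa [max_eq_left (by linarith : (-1:ℝ) ≤ 2*a-1)] at this
    have harclim : Tendsto (fun t => Real.arccos (max (R t) (-1))) (𝓝[>] (0:ℝ))
        (𝓝 (Real.arccos (2*a-1))) :=
      (Real.continuous_arccos.tendsto _).comp hmaxlim
    have hsinlim : Tendsto (fun t => Real.sin (Real.arccos (max (R t) (-1)))) (𝓝[>] (0:ℝ))
        (𝓝 (Real.sin (Real.arccos (2*a-1)))) :=
      (Real.continuous_sin.tendsto _).comp harclim
    have hBlim : Tendsto B (𝓝[>] (0:ℝ))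
        (𝓝 (Real.arccos (Real.sqrt a) - Real.sqrt a * Real.sqrt (1-a))) := by
      have := (harclim.sub (tendsto_div_sinh.mul hsinlim)).div_const 2
      rw [hsσ, hu2] at this
      rw [show (2*Real.arccos (Real.sqrt a) - 1*(2*Real.sqrt (1-a)*Real.sqrt a))/2
        = Real.arccos (Real.sqrt a) - Real.sqrt a * Real.sqrt (1-a) by ring] at this
      exact this
    have hev : ∀ᶠ t in 𝓝[>] (0:ℝ), B t < β ∧ -1 < R t :=
      (hBlim.eventually_lt_const hT).and (hRlim.eventually_const_lt (by linarith))
    obtain ⟨t₀, ⟨hBt₀, hRt₀⟩, ht₀lt, ht₀pos⟩ := (hev.and hevsmall).exists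
    have hIcc1 : Set.Icc t₀ (2*a+1) ⊆ Set.Ioi 0 := fun t htm => lt_of_lt_of_le ht₀pos htm.1
    obtain ⟨τ, hτmem, hτ⟩ := intermediate_value_Icc' ht₀lt.le (hRcont.mono hIcc1)
      (Set.mem_Icc.mpr ⟨ht1'.le, hRt₀.le⟩)
    have hτpos : 0 < τ := hIcc1 hτmem
    rcases eq_or_lt_of_le hβπ with hβeq | hβlt
    · apply assemble hτpos (sv := Real.pi)
      · rw [Real.cos_pi, ← hτ]
      · rw [Real.sin_pi, hβeq]; ring
    have hBτ : B τ = Real.pi/2 := by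
      rw [hBdef]
      simp only
      rw [hτ, max_self, Real.arccos_neg_one, Real.sin_pi]
      ring
    have hIcc3 : Set.Icc t₀ τ ⊆ Set.Ioi 0 := fun t htm => lt_of_lt_of_le ht₀pos htm.1
    obtain ⟨t', ht'mem, hBt'⟩ := intermediate_value_Icc hτmem.1 (hBcont.mono hIcc3)
      (show β ∈ Set.Icc (B t₀) (B τ) from ⟨hBt₀.le, hBτ ▸ hβπ⟩)
    have ht'pos : 0 < t' := hIcc3 ht'mem
    have hcs := cos_arccos_max hβpos hβlt hBt'
    exact assemble ht'pos hcs hBt'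

lemma gab_mem {a b : ℝ} (ha : 0 < a) {z : ℂ} (hz : z ∈ upperHalf) : gab a b z ∈ upperHalf := by
  have h := tan_im_pos (show 0 < z.im from hz)
  show 0 < (gab a b z).im
  rw [gab]
  simp only [Complex.add_im, Complex.mul_im, Complex.ofReal_re, Complex.ofReal_im]
  have : a * (Complex.tan z).im + 0 * (Complex.tan z).re + 0 = a * (Complex.tan z).im := by ring
  rw [this]
  positivity

lemma part1 : ∀ a b a' b' : ℝ, 0 < a → b ∈ Set.Ioc (-(π / 2)) (π / 2) →
      0 < a' → b' ∈ Set.Ioc (-(π / 2)) (π / 2) → (a, b) ≠ (a', b') →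
      ¬ ∃ ψ : ℂ → ℂ, MobiusH ψ ∧ Set.BijOn ψ upperHalf upperHalf ∧
          ∀ z ∈ upperHalf, ψ (gab a b z) = gab a' b' (ψ z) := by
  intro a b a' b' ha hb ha' hb' hne
  rintro ⟨ψ, ⟨p, q, r, s, hdet, hform⟩, hbij, hconj⟩
  have hmaps : ∀ z ∈ upperHalf, gab a b z ∈ upperHalf := fun z hz => gab_mem ha hz
  rcases eq_or_ne r 0 with hr | hr
  · -- r = 0 : ψ is affine
    subst hr
    simp only [mul_zero, sub_zero] at hdet
    have hs0 : s ≠ 0 := by rintro rfl; simp at hdet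
    set lam := p/s with hlam
    set mu := q/s with hmu
    have hlampos : 0 < lam := by
      rw [hlam]
      rcases mul_pos_iff.mp hdet with ⟨hp, hs⟩ | ⟨hp, hs⟩
      · exact div_pos hp hs
      · exact div_pos_of_neg_of_neg hp hs
    have hsC : (s:ℂ) ≠ 0 := Complex.ofReal_ne_zero.mpr hs0
    have hψ : ∀ z ∈ upperHalf, ψ z = (lam:ℂ)*z + (mu:ℂ) := by
      intro z hz
      rw [hform z hz, hlam, hmu]
      push_cast
      simp only [zero_mul, zero_add]
      field_simp
    -- limits along the imaginary axis
    have hG : Tendsto (fun y:ℝ => (lam:ℂ)*((a:ℂ)*Complex.tan (((0:ℝ):ℂ) + ((1*y:ℝ):ℂ)*I) + (b:ℂ)) + (mu:ℂ))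
        atTop (𝓝 ((lam:ℂ)*((a:ℂ)*I + (b:ℂ)) + (mu:ℂ))) :=
      ((((tendsto_tan_vert 0 1 one_pos).const_mul (a:ℂ)).add_const (b:ℂ)).const_mul (lam:ℂ)).add_const (mu:ℂ)
    have hF : Tendsto (fun y:ℝ => (a':ℂ)*Complex.tan ((mu:ℂ) + ((lam*y:ℝ):ℂ)*I) + (b':ℂ))
        atTop (𝓝 ((a':ℂ)*I + (b':ℂ))) :=
      ((tendsto_tan_vert mu lam hlampos).const_mul (a':ℂ)).add_const (b':ℂ)
    have heq : ∀ᶠ y in atTop, (lam:ℂ)*((a:ℂ)*Complex.tan (((0:ℝ):ℂ) + ((1*y:ℝ):ℂ)*I) + (b:ℂ)) + (mu:ℂ)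
        = (a':ℂ)*Complex.tan ((mu:ℂ) + ((lam*y:ℝ):ℂ)*I) + (b':ℂ) := by
      filter_upwards [eventually_gt_atTop 0] with y hy
      set z : ℂ := ((0:ℝ):ℂ) + ((1*y:ℝ):ℂ)*I with hzdef
      have hz : z ∈ upperHalf := by
        show 0 < z.im
        rw [hzdef]; simp; linarith
      have hgz : gab a b z ∈ upperHalf := hmaps z hz
      have hc := hconj z hz
      rw [hψ _ hgz, hψ _ hz] at hc
      rw [show (mu:ℂ) + ((lam*y:ℝ):ℂ)*I = (lam:ℂ)*z + (mu:ℂ) by rw [hzdef]; push_cast; ring]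
      rw [gab] at hc
      rw [gab] at hc
      exact hc
    have hlim := tendsto_nhds_unique (hG.congr' heq) hF
    have hlim_im := congrArg Complex.im hlim
    have hlim_re := congrArg Complex.re hlim
    simp only [Complex.add_im, Complex.add_re, Complex.mul_im, Complex.mul_re,
      Complex.ofReal_re, Complex.ofReal_im, Complex.I_re, Complex.I_im] at hlim_im hlim_re
    have him : lam * a = a' := by linarith
    have hre : lam * b + mu = b' := by linarith
    -- pointwise at z = I
    have hzI : Complex.I ∈ upperHalf := by show (0:ℝ) < Complex.I.im; simp
    have hgI : gab a b Complex.I ∈ upperHalf := hmaps _ hzI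
    have h0 := hconj Complex.I hzI
    rw [hψ _ hgI, hψ _ hzI] at h0
    rw [gab, gab] at h0
    have himC : ((lam:ℂ))*(a:ℂ) = (a':ℂ) := by
      rw [show (a':ℂ) = ((lam*a : ℝ):ℂ) by rw [him]]
      push_cast; ring
    have hreC : ((lam:ℂ))*(b:ℂ) + (mu:ℂ) = (b':ℂ) := by
      rw [show (b':ℂ) = ((lam*b+mu : ℝ):ℂ) by rw [hre]]
      push_cast; ring
    have htan : (lam:ℂ)*(a:ℂ)*Complex.tan Complex.I = (lam:ℂ)*(a:ℂ)*Complex.tan ((lam:ℂ)*Complex.I + (mu:ℂ)) := by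
      linear_combination h0 - hreC - Complex.tan ((lam:ℂ)*Complex.I + (mu:ℂ)) * himC
    have hla : (lam:ℂ)*(a:ℂ) ≠ 0 := by
      apply mul_ne_zero <;> simp [Complex.ofReal_ne_zero] <;> [exact ne_of_gt hlampos; exact ne_of_gt ha]
    have htan2 : Complex.tan Complex.I = Complex.tan ((lam:ℂ)*Complex.I + (mu:ℂ)) := by
      have := mul_left_cancel₀ hla htan
      exact this
    have hcos1 : Complex.cos Complex.I ≠ 0 := cos_ne_zero_of_im_ne (by simp)
    have hcos2 : Complex.cos ((lam:ℂ)*Complex.I + (mu:ℂ)) ≠ 0 := by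
      apply cos_ne_zero_of_im_ne
      simp [Complex.add_im, Complex.mul_im]
      exact ne_of_gt hlampos
    obtain ⟨k, hk⟩ := tan_sub_int_pi hcos1 hcos2 htan2
    have hk_im := congrArg Complex.im hk
    have hk_re := congrArg Complex.re hk
    simp only [Complex.sub_im, Complex.sub_re, Complex.add_im, Complex.add_re, Complex.mul_im,
      Complex.mul_re, Complex.ofReal_re, Complex.ofReal_im, Complex.I_re, Complex.I_im,
      Complex.intCast_im, Complex.intCast_re] at hk_im hk_re
    -- hk_im : 1 - lam = 0 ; hk_re : -mu = k * π
    simp only [mul_one, mul_zero, zero_mul, add_zero, zero_add, sub_zero, zero_sub] at hk_im hk_re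
    have hlam1 : lam = 1 := by linarith [hk_im]
    have hmuk : -mu = (k:ℝ) * Real.pi := by linarith [hk_re]
    have haa : a = a' := by rw [← him, hlam1]; ring
    have hbb : b - b' = (k:ℝ) * Real.pi := by
      rw [← hre, hlam1]
      linarith [hmuk]
    have hk0 : k = 0 := by
      by_contra hkne
      have h1 : (1:ℝ) ≤ |(k:ℝ)| := by
        rw [show |(k:ℝ)| = ((|k| : ℤ) : ℝ) by push_cast; ring]
        exact_mod_cast Int.one_le_abs hkne
      have h2 : |b - b'| < Real.pi := by
        rw [abs_sub_lt_iff]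
        constructor <;> nlinarith [hb.1, hb.2, hb'.1, hb'.2, Real.pi_pos]
      rw [hbb, abs_mul, abs_of_pos Real.pi_pos] at h2
      nlinarith [Real.pi_pos, h1]
    have hbb' : b = b' := by rw [hk0] at hbb; push_cast at hbb; linarith
    exact hne (by rw [haa, hbb'])
  · -- r ≠ 0
    set Δ := p*s - q*r with hΔ
    set y₀ := Real.sqrt Δ / |r| + 1 with hy₀def
    have habsr : 0 < |r| := abs_pos.mpr hr
    have hy₀ : 0 < y₀ := by positivity
    have hry : |r| * y₀ = Real.sqrt Δ + |r| := by
      rw [hy₀def]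
      field_simp
    have hbig : Δ < (r*y₀)^2 := by
      have h1 : (r*y₀)^2 = (|r| * y₀)^2 := by
        rw [mul_pow, mul_pow, _root_.sq_abs]
      rw [h1, hry]
      nlinarith [Real.sq_sqrt hdet.le, Real.sqrt_nonneg Δ, habsr]
    set z : ℂ := ((y₀:ℝ):ℂ)*I with hzdef
    have hz : z ∈ upperHalf := by show 0 < z.im; rw [hzdef]; simp [hy₀]
    have hzπ : z + ((Real.pi:ℝ):ℂ) ∈ upperHalf := by
      show 0 < (z + ((Real.pi:ℝ):ℂ)).im
      rw [hzdef]; simp [hy₀]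
    have hgper : gab a b (z + ((Real.pi:ℝ):ℂ)) = gab a b z := by
      show (a:ℂ) * Complex.tan (z + ((Real.pi:ℝ):ℂ)) + (b:ℂ) = (a:ℂ) * Complex.tan z + (b:ℂ)
      rw [Complex.tan_periodic z]
    have hu := hbij.mapsTo hzπ
    have hv := hbij.mapsTo hz
    have htaneq : Complex.tan (ψ (z + ((Real.pi:ℝ):ℂ))) = Complex.tan (ψ z) := by
      have h1 := hconj _ hzπ
      have h2 := hconj z hz
      rw [hgper] at h1
      have h3 : gab a' b' (ψ (z + ((Real.pi:ℝ):ℂ))) = gab a' b' (ψ z) := by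
        rw [← h1, ← h2]
      rw [gab, gab] at h3
      have ha'C : (a':ℂ) ≠ 0 := Complex.ofReal_ne_zero.mpr (ne_of_gt ha')
      apply mul_left_cancel₀ ha'C
      linear_combination h3
    obtain ⟨k, hk⟩ := tan_sub_int_pi
      (cos_ne_zero_of_im_ne (ne_of_gt (show (0:ℝ) < (ψ (z + ((Real.pi:ℝ):ℂ))).im from hu)))
      (cos_ne_zero_of_im_ne (ne_of_gt (show (0:ℝ) < (ψ z).im from hv))) htaneq
    have hk0 : k ≠ 0 := by
      rintro rfl
      simp only [Int.cast_zero, zero_mul] at hk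
      have heqψ : ψ (z + ((Real.pi:ℝ):ℂ)) = ψ z := by
        have := sub_eq_zero.mp hk
        exact this
      have := hbij.injOn hzπ hz heqψ
      have hπ : ((Real.pi:ℝ):ℂ) ≠ 0 := Complex.ofReal_ne_zero.mpr Real.pi_ne_zero
      apply hπ
      linear_combination this
    have hlow : Real.pi ≤ ‖ψ (z + ((Real.pi:ℝ):ℂ)) - ψ z‖ := by
      rw [hk]
      rw [show ((k:ℂ))*((Real.pi:ℝ):ℂ) = (((k*Real.pi : ℝ)):ℂ) by push_cast; ring]
      rw [Complex.norm_real, Real.norm_eq_abs, abs_mul, abs_of_pos Real.pi_pos]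
      have h1 : (1:ℝ) ≤ |(k:ℝ)| := by
        rw [show |(k:ℝ)| = ((|k| : ℤ) : ℝ) by push_cast; ring]
        exact_mod_cast Int.one_le_abs hk0
      nlinarith [Real.pi_pos]
    -- explicit difference formula
    set D₁ : ℂ := (r:ℂ)*(z + ((Real.pi:ℝ):ℂ)) + (s:ℂ) with hD₁def
    set D₂ : ℂ := (r:ℂ)*z + (s:ℂ) with hD₂def
    have hD₁im : D₁.im = r*y₀ := by rw [hD₁def, hzdef]; simp
    have hD₂im : D₂.im = r*y₀ := by rw [hD₂def, hzdef]; simp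
    have hry0 : r*y₀ ≠ 0 := mul_ne_zero hr (ne_of_gt hy₀)
    have hD₁ : D₁ ≠ 0 := fun h0 => hry0 (by rw [← hD₁im, h0]; simp)
    have hD₂ : D₂ ≠ 0 := fun h0 => hry0 (by rw [← hD₂im, h0]; simp)
    have hformula : ψ (z + ((Real.pi:ℝ):ℂ)) - ψ z
        = (((Real.pi:ℝ):ℂ)*((Δ:ℝ):ℂ))/(D₁*D₂) := by
      have h1' : (r:ℂ)*(z + ((Real.pi:ℝ):ℂ)) + (s:ℂ) ≠ 0 := hD₁
      have h2' : (r:ℂ)*z + (s:ℂ) ≠ 0 := hD₂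
      rw [hform _ hzπ, hform _ hz, hD₁def, hD₂def, hΔ]
      rw [div_sub_div _ _ h1' h2', div_eq_div_iff (mul_ne_zero h1' h2') (mul_ne_zero h1' h2')]
      push_cast
      ring
    have habsD₁ : |r| * y₀ ≤ ‖D₁‖ := by
      have := Complex.abs_im_le_norm D₁
      rw [hD₁im, abs_mul, abs_of_pos hy₀] at this
      exact this
    have habsD₂ : |r| * y₀ ≤ ‖D₂‖ := by
      have := Complex.abs_im_le_norm D₂
      rw [hD₂im, abs_mul, abs_of_pos hy₀] at this
      exact this
    have hup : ‖ψ (z + ((Real.pi:ℝ):ℂ)) - ψ z‖ < Real.pi := by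
      rw [hformula, norm_div, norm_mul, Complex.norm_real, Complex.norm_real, Real.norm_eq_abs,
        Real.norm_eq_abs, abs_of_pos Real.pi_pos, abs_of_pos hdet, norm_mul]
      rw [div_lt_iff₀ (mul_pos (norm_pos_iff.mpr hD₁) (norm_pos_iff.mpr hD₂))]
      have hprod : (|r| * y₀)*(|r| * y₀) ≤ ‖D₁‖ * ‖D₂‖ := by
        apply mul_le_mul habsD₁ habsD₂ (by positivity) (norm_nonneg _)
      have h2 : (|r| * y₀)*(|r| * y₀) = (r*y₀)^2 := by
        rw [show (|r| * y₀)*(|r| * y₀) = (|r| * y₀)^2 by ring, mul_pow, mul_pow, _root_.sq_abs]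
      nlinarith [Real.pi_pos]
    linarith

lemma part2 (a b : ℝ) (ha : 0 < a) (hb : b ∈ Set.Ioc (-(π / 2)) (π / 2)) :
    ((∃ w ∈ upperHalf, gab a b w = w ∧ ‖deriv (gab a b) w‖ < 1) ↔
        (1 < a ∨ (a ≤ 1 ∧
          Real.arccos (Real.sqrt a) - Real.sqrt a * Real.sqrt (1 - a) < |b|))) := by
  constructor
  · rintro ⟨w, hw, hfix, -⟩
    have hyim : 0 < w.im := hw
    have hfix' : gab a b ((w.re:ℂ) + (w.im:ℂ)*I) = (w.re:ℂ) + (w.im:ℂ)*I := by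
      rw [Complex.re_add_im w]
      exact hfix
    obtain ⟨h1, h2⟩ := fixedpoint_equations hyim hfix'
    by_cases hgt : 1 < a
    · exact Or.inl hgt
    · exact Or.inr ⟨le_of_not_gt hgt, forward_ineq ha (le_of_not_gt hgt) hyim h1 h2⟩
  · intro hcond
    have hβ0 : 0 ≤ |b| := abs_nonneg b
    have hβπ : |b| ≤ Real.pi/2 := abs_le.mpr ⟨by linarith [hb.1], hb.2⟩
    obtain ⟨x, y, hy, h1, h2⟩ := construct ha hβ0 hβπ hcond
    rcases le_or_gt 0 b with hbpos | hbneg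
    · rw [_root_.abs_of_nonneg hbpos] at h2
      exact exists_fixed_point ha hy h1 h2
    · rw [_root_.abs_of_neg hbneg] at h2
      have h1' : a * Real.sinh y * Real.cosh y
          = y * (Real.cos (-x) ^ 2 * Real.cosh y ^ 2 + Real.sin (-x) ^ 2 * Real.sinh y ^ 2) := by
        rw [Real.cos_neg, Real.sin_neg]
        linear_combination h1
      have h2' : a * Real.sin (-x) * Real.cos (-x)
          = ((-x) - b) * (Real.cos (-x) ^ 2 * Real.cosh y ^ 2 + Real.sin (-x) ^ 2 * Real.sinh y ^ 2) := by
        rw [Real.cos_neg, Real.sin_neg]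
        linear_combination -h2
      exact exists_fixed_point ha hy h1' h2'
end St15

/-- Proposition 5.3, "Fatou's associates".
In the family `g_{a,b}(z) = a tan z + b` (`a > 0`, `b ∈ (−π/2, π/2]`): no two different
members are conformally conjugate, and `g_{a,b}` has an attracting fixed point in `ℍ` if
and only if `a > 1`, or `a ≤ 1` and `|b| > arccos √a − √a·√(1 − a)`. -/
theorem statement15 :
    (∀ a b a' b' : ℝ, 0 < a → b ∈ Set.Ioc (-(π / 2)) (π / 2) →
      0 < a' → b' ∈ Set.Ioc (-(π / 2)) (π / 2) → (a, b) ≠ (a', b') →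
      ¬ ∃ ψ : ℂ → ℂ, MobiusH ψ ∧ Set.BijOn ψ upperHalf upperHalf ∧
          ∀ z ∈ upperHalf, ψ (gab a b z) = gab a' b' (ψ z)) ∧
    (∀ a b : ℝ, 0 < a → b ∈ Set.Ioc (-(π / 2)) (π / 2) →
      ((∃ w ∈ upperHalf, gab a b w = w ∧ ‖deriv (gab a b) w‖ < 1) ↔
        (1 < a ∨ (a ≤ 1 ∧
          Real.arccos (Real.sqrt a) - Real.sqrt a * Real.sqrt (1 - a) < |b|)))) := by
  
    exact ⟨St15.part1, St15.part2⟩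
end

section
/- Suppose that (B_n)_{n ∈ ℕ} is a sequence of finite Blaschke products, all of degree d, which converges locally uniformly on 𝔻 to a finite Blaschke product B of degree d. Then the convergence is uniform on all of 𝔻. -/
open Complex Filter Set Metric Topology
open scoped ENNReal Real Topology

noncomputable section St19Aux

/-- The "rotation-free" Blaschke factor. -/
def st19rf (a z : ℂ) : ℂ := (a - z) / (1 - (starRingEnd ℂ) a * z)

lemma st19_denom_ne {a z : ℂ} (h : ‖a‖ * ‖z‖ < 1) :
    (1 : ℂ) - (starRingEnd ℂ) a * z ≠ 0 := by
  intro h0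
  have h1 : (starRingEnd ℂ) a * z = 1 := by linear_combination -h0
  have h2 := congrArg (‖·‖) h1
  rw [norm_mul, Complex.norm_conj, norm_one] at h2
  rw [h2] at h
  exact lt_irrefl _ h

lemma st19_denom_lb {a z : ℂ} (hz : ‖z‖ ≤ 1) :
    1 - ‖a‖ ≤ ‖1 - (starRingEnd ℂ) a * z‖ := by
  have h := norm_sub_norm_le (1 : ℂ) ((starRingEnd ℂ) a * z)
  simp only [norm_one, norm_mul, Complex.norm_conj] at h
  nlinarith [norm_nonneg a, norm_nonneg z]

lemma st19_rf_abs_le {a z : ℂ} (ha : ‖a‖ ≤ 1) (hz : ‖z‖ ≤ 1) :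
    ‖st19rf a z‖ ≤ 1 := by
  by_cases h : (1 : ℂ) - (starRingEnd ℂ) a * z = 0
  · rw [st19rf, h, div_zero]; simp
  · rw [st19rf, norm_div, div_le_one (norm_pos_iff.mpr h)]
    have ha2 : Complex.normSq a ≤ 1 := by
      rw [Complex.normSq_eq_norm_sq]; nlinarith [norm_nonneg a]
    have hz2 : Complex.normSq z ≤ 1 := by
      rw [Complex.normSq_eq_norm_sq]; nlinarith [norm_nonneg z]
    have hid : Complex.normSq (1 - (starRingEnd ℂ) a * z) - Complex.normSq (a - z)
        = (1 - Complex.normSq a) * (1 - Complex.normSq z) := by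
      simp only [Complex.normSq_apply, Complex.sub_re, Complex.sub_im, Complex.mul_re,
        Complex.mul_im, Complex.one_re, Complex.one_im, Complex.conj_re, Complex.conj_im]
      ring
    have h1 : Complex.normSq (a - z) ≤ Complex.normSq (1 - (starRingEnd ℂ) a * z) := by
      nlinarith [mul_nonneg (sub_nonneg.2 ha2) (sub_nonneg.2 hz2)]
    rw [Complex.norm_def, Complex.norm_def]
    exact Real.sqrt_le_sqrt h1

lemma st19_rf_dist {a b z : ℂ} (ha : ‖a‖ < 1) (hb : ‖b‖ < 1)
    (hz : ‖z‖ ≤ 1) :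
    ‖st19rf a z - st19rf b z‖
      ≤ 4 * ‖a - b‖ / ((1 - ‖a‖) * (1 - ‖b‖)) := by
  have hda : (1:ℂ) - (starRingEnd ℂ) a * z ≠ 0 :=
    st19_denom_ne (lt_of_le_of_lt (mul_le_of_le_one_right (norm_nonneg a) hz) ha)
  have hdb : (1:ℂ) - (starRingEnd ℂ) b * z ≠ 0 :=
    st19_denom_ne (lt_of_le_of_lt (mul_le_of_le_one_right (norm_nonneg b) hz) hb)
  have key : st19rf a z - st19rf b z =
      ((a - b) + (b * (starRingEnd ℂ) a - a * (starRingEnd ℂ) b) * z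
        + ((starRingEnd ℂ) b - (starRingEnd ℂ) a) * z ^ 2)
      / ((1 - (starRingEnd ℂ) a * z) * (1 - (starRingEnd ℂ) b * z)) := by
    rw [st19rf, st19rf, div_sub_div _ _ hda hdb]
    congr 1
    ring
  rw [key, norm_div, norm_mul]
  have hnum : ‖(a - b) + (b * (starRingEnd ℂ) a - a * (starRingEnd ℂ) b) * z
        + ((starRingEnd ℂ) b - (starRingEnd ℂ) a) * z ^ 2‖ ≤ 4 * ‖a - b‖ := by
    have t1 : ‖b * (starRingEnd ℂ) a - a * (starRingEnd ℂ) b‖ ≤ 2 * ‖a - b‖ := by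
      have e : b * (starRingEnd ℂ) a - a * (starRingEnd ℂ) b
          = (starRingEnd ℂ) a * (b - a) + a * ((starRingEnd ℂ) a - (starRingEnd ℂ) b) := by ring
      rw [e]
      calc ‖_‖ ≤ ‖(starRingEnd ℂ) a * (b - a)‖
            + ‖a * ((starRingEnd ℂ) a - (starRingEnd ℂ) b)‖ := norm_add_le _ _
        _ = ‖a‖ * ‖b - a‖ + ‖a‖ * ‖a - b‖ := by
            rw [norm_mul, norm_mul, Complex.norm_conj, ← map_sub (starRingEnd ℂ), Complex.norm_conj]
        _ ≤ 2 * ‖a - b‖ := by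
            rw [norm_sub_rev b a]
            nlinarith [norm_nonneg (a - b)]
    have t2 : ‖(starRingEnd ℂ) b - (starRingEnd ℂ) a‖ = ‖a - b‖ := by
      rw [← map_sub (starRingEnd ℂ), Complex.norm_conj, norm_sub_rev]
    calc ‖_‖ ≤ ‖(a - b) + (b * (starRingEnd ℂ) a - a * (starRingEnd ℂ) b) * z‖
          + ‖((starRingEnd ℂ) b - (starRingEnd ℂ) a) * z ^ 2‖ := norm_add_le _ _
      _ ≤ ‖a - b‖ + ‖(b * (starRingEnd ℂ) a - a * (starRingEnd ℂ) b) * z‖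
          + ‖((starRingEnd ℂ) b - (starRingEnd ℂ) a) * z ^ 2‖ := by
          have := norm_add_le (a - b) ((b * (starRingEnd ℂ) a - a * (starRingEnd ℂ) b) * z)
          linarith
      _ ≤ 4 * ‖a - b‖ := by
          rw [norm_mul, norm_mul, t2, norm_pow]
          have hz2 : ‖z‖ ^ 2 ≤ 1 := by nlinarith [norm_nonneg z]
          nlinarith [norm_nonneg (b * (starRingEnd ℂ) a - a * (starRingEnd ℂ) b),
            norm_nonneg (a - b), norm_nonneg z, t1]
  have hd1 : 0 < (1 - ‖a‖) * (1 - ‖b‖) :=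
    mul_pos (by linarith) (by linarith)
  have hd2 : (1 - ‖a‖) * (1 - ‖b‖)
      ≤ ‖1 - (starRingEnd ℂ) a * z‖ * ‖1 - (starRingEnd ℂ) b * z‖ :=
    mul_le_mul (st19_denom_lb hz) (st19_denom_lb hz) (by linarith) (norm_nonneg _)
  exact div_le_div₀ (by positivity) hnum hd1 hd2

lemma st19_abs_prod_le_one {ι : Type*} (s : Finset ι) (x : ι → ℂ)
    (hx : ∀ i, ‖x i‖ ≤ 1) : ‖∏ i ∈ s, x i‖ ≤ 1 := by
  rw [norm_prod]
  exact Finset.prod_le_one (fun i _ => norm_nonneg _) (fun i _ => hx i)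

lemma st19_abs_prod_sub {ι : Type*} (s : Finset ι) (x y : ι → ℂ)
    (hx : ∀ i, ‖x i‖ ≤ 1) (hy : ∀ i, ‖y i‖ ≤ 1) :
    ‖∏ i ∈ s, x i - ∏ i ∈ s, y i‖ ≤ ∑ i ∈ s, ‖x i - y i‖ := by
  classical
  induction s using Finset.cons_induction with
  | empty => simp
  | cons a s ha ih =>
    rw [Finset.prod_cons, Finset.prod_cons, Finset.sum_cons]
    have e : x a * ∏ i ∈ s, x i - y a * ∏ i ∈ s, y i
        = (x a - y a) * ∏ i ∈ s, x i + y a * (∏ i ∈ s, x i - ∏ i ∈ s, y i) := by ring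
    rw [e]
    calc ‖_‖ ≤ ‖(x a - y a) * ∏ i ∈ s, x i‖
          + ‖y a * (∏ i ∈ s, x i - ∏ i ∈ s, y i)‖ := norm_add_le _ _
      _ = ‖x a - y a‖ * ‖∏ i ∈ s, x i‖
          + ‖y a‖ * ‖∏ i ∈ s, x i - ∏ i ∈ s, y i‖ := by
          rw [norm_mul, norm_mul]
      _ ≤ ‖x a - y a‖ * 1 + 1 * ∑ i ∈ s, ‖x i - y i‖ := by
          have h1 := mul_le_mul_of_nonneg_left (st19_abs_prod_le_one s x hx) (norm_nonneg (x a - y a))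
          have h2 := mul_le_mul (hy a) ih (norm_nonneg _) zero_le_one
          linarith
      _ = ‖x a - y a‖ + ∑ i ∈ s, ‖x i - y i‖ := by ring

lemma st19_normal {d : ℕ} {g : ℂ → ℂ} (h : IsFiniteBlaschke d g) :
    ∃ (μ : ℂ) (a : Fin d → ℂ), ‖μ‖ = 1 ∧ (∀ i, ‖a i‖ < 1) ∧
      ∀ z, g z = μ * ∏ i, st19rf (a i) z := by
  classical
  obtain ⟨θ, a, ha, hg⟩ := h
  refine ⟨Complex.exp (θ * Complex.I)
    * ∏ i, (if a i = 0 then (-1 : ℂ) else (‖a i‖ : ℂ) / a i), a, ?_, ha, ?_⟩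
  · rw [norm_mul, Complex.norm_exp_ofReal_mul_I, one_mul, norm_prod]
    apply Finset.prod_eq_one
    intro i _
    by_cases h0 : a i = 0
    · simp [h0]
    · rw [if_neg h0, norm_div, Complex.norm_real, Real.norm_eq_abs, _root_.abs_of_nonneg (norm_nonneg _),
        div_self (fun hh => h0 (norm_eq_zero.1 hh))]
  · intro z
    rw [hg z, mul_assoc, ← Finset.prod_mul_distrib]
    congr 1
    apply Finset.prod_congr rfl
    intro i _
    by_cases h0 : a i = 0
    · simp [blaschkeFactor, st19rf, h0]
    · simp only [blaschkeFactor, st19rf, if_neg h0]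

lemma st19_coprime_pair {b c : ℂ} (hb : ‖b‖ < 1) (hc : ‖c‖ < 1) :
    IsCoprime (Polynomial.C b - Polynomial.X)
      (1 - Polynomial.C ((starRingEnd ℂ) c) * Polynomial.X) := by
  have hne : (1 : ℂ) - (starRingEnd ℂ) c * b ≠ 0 := by
    intro h0
    have h1 : (starRingEnd ℂ) c * b = 1 := by linear_combination -h0
    have h2 := congrArg (‖·‖) h1
    rw [norm_mul, Complex.norm_conj, norm_one] at h2
    nlinarith [norm_nonneg b, norm_nonneg c]
  set y : ℂ := (1 - (starRingEnd ℂ) c * b)⁻¹ with hy0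
  have hy : y * (1 - (starRingEnd ℂ) c * b) = 1 := inv_mul_cancel₀ hne
  refine ⟨Polynomial.C (-(starRingEnd ℂ) c * y), Polynomial.C y, ?_⟩
  have hy' : Polynomial.C (y * (1 - (starRingEnd ℂ) c * b)) = (1 : Polynomial ℂ) := by
    rw [hy, Polynomial.C_1]
  simp only [map_mul, map_sub, map_one, map_neg] at hy' ⊢
  linear_combination hy'

lemma st19_full {d : ℕ} (ν μ : ℂ) (β α : Fin d → ℂ)
    (hν : ν ≠ 0) (hμ : μ ≠ 0) (hβ : ∀ i, ‖β i‖ < 1)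
    (hα : ∀ i, ‖α i‖ ≤ 1)
    (heq : ∀ z : ℂ, ‖z‖ < 1 → ν * ∏ i, st19rf (β i) z = μ * ∏ i, st19rf (α i) z) :
    ∀ i, ‖α i‖ < 1 := by
  classical
  set S : Finset (Fin d) := Finset.univ.filter (fun i => ‖α i‖ < 1) with hS
  have hbd : ∀ i ∈ Finset.univ.filter (fun i => ¬ ‖α i‖ < 1),
      ‖α i‖ = 1 := fun i hi =>
    le_antisymm (hα i) (not_lt.1 (Finset.mem_filter.1 hi).2)
  obtain ⟨Pout, hPout⟩ : ∃ P, (∏ i ∈ Finset.univ.filter (fun i => ¬ ‖α i‖ < 1), α i) = P := ⟨_, rfl⟩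
  set μ' : ℂ := μ * Pout with hμ'
  have hμ'ne : μ' ≠ 0 := by
    apply mul_ne_zero hμ
    rw [← hPout, Finset.prod_ne_zero_iff]
    intro i hi h0
    have h1 := hbd i hi
    rw [h0] at h1; simp at h1
  have key : ∀ z : ℂ, ‖z‖ < 1 →
      ν * ((∏ i, (β i - z)) * ∏ i ∈ S, (1 - (starRingEnd ℂ) (α i) * z))
      = μ' * ((∏ i ∈ S, (α i - z)) * ∏ i, (1 - (starRingEnd ℂ) (β i) * z)) := by
    intro z hz
    have hβd : ∀ i : Fin d, (1 : ℂ) - (starRingEnd ℂ) (β i) * z ≠ 0 := fun i =>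
      st19_denom_ne (lt_of_le_of_lt (mul_le_of_le_one_left (norm_nonneg z) (hβ i).le) hz)
    have hαd : ∀ i : Fin d, (1 : ℂ) - (starRingEnd ℂ) (α i) * z ≠ 0 := fun i =>
      st19_denom_ne (lt_of_le_of_lt (mul_le_of_le_one_left (norm_nonneg z) (hα i)) hz)
    have h0 := heq z hz
    have hsplit : (∏ i, st19rf (α i) z)
        = Pout * ∏ i ∈ S, st19rf (α i) z := by
      rw [← hPout]
      rw [← Finset.prod_filter_mul_prod_filter_not Finset.univ
        (fun i => ‖α i‖ < 1) (fun i => st19rf (α i) z), mul_comm]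
      congr 1
      refine Finset.prod_congr rfl fun i hi => ?_
      have h1 : ‖α i‖ = 1 := hbd i hi
      have hmc : α i * (starRingEnd ℂ) (α i) = 1 := by
        rw [Complex.mul_conj, Complex.normSq_eq_norm_sq, h1]
        norm_num
      rw [st19rf, div_eq_iff (hαd i)]
      linear_combination z * hmc
    rw [hsplit] at h0
    have e1 : (∏ i, st19rf (β i) z)
        = (∏ i, (β i - z)) / ∏ i, (1 - (starRingEnd ℂ) (β i) * z) := by
      rw [← Finset.prod_div_distrib]
      rfl
    have e2 : (∏ i ∈ S, st19rf (α i) z)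
        = (∏ i ∈ S, (α i - z)) / ∏ i ∈ S, (1 - (starRingEnd ℂ) (α i) * z) := by
      rw [← Finset.prod_div_distrib]
      rfl
    rw [e1, e2] at h0
    have hBne : (∏ i, ((1:ℂ) - (starRingEnd ℂ) (β i) * z)) ≠ 0 :=
      Finset.prod_ne_zero_iff.2 fun i _ => hβd i
    have hDne : (∏ i ∈ S, ((1:ℂ) - (starRingEnd ℂ) (α i) * z)) ≠ 0 :=
      Finset.prod_ne_zero_iff.2 fun i _ => hαd i
    have hb1 := mul_inv_cancel₀ hBne
    have hd1 := mul_inv_cancel₀ hDne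
    simp only [div_eq_mul_inv] at h0
    linear_combination ((∏ i, ((1:ℂ) - (starRingEnd ℂ) (β i) * z)) * ∏ i ∈ S, ((1:ℂ) - (starRingEnd ℂ) (α i) * z)) * h0
      - ν * (∏ i, (β i - z)) * (∏ i ∈ S, ((1:ℂ) - (starRingEnd ℂ) (α i) * z)) * hb1
      + μ * Pout * (∏ i ∈ S, (α i - z)) * (∏ i, ((1:ℂ) - (starRingEnd ℂ) (β i) * z)) * hd1
  -- polynomial identity
  have hpoly : (Polynomial.C ν) * ((∏ i, (Polynomial.C (β i) - Polynomial.X))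
        * ∏ i ∈ S, (1 - Polynomial.C ((starRingEnd ℂ) (α i)) * Polynomial.X))
      = (Polynomial.C μ') * ((∏ i ∈ S, (Polynomial.C (α i) - Polynomial.X))
        * ∏ i, (1 - Polynomial.C ((starRingEnd ℂ) (β i)) * Polynomial.X)) := by
    apply Polynomial.eq_of_infinite_eval_eq
    have hball : ({z : ℂ | ‖z‖ < 1}).Infinite := by
      apply Set.infinite_of_injective_forall_mem (f := fun n : ℕ => ((((n : ℝ) + 2)⁻¹ : ℝ) : ℂ))
      · intro m n hmn
        have h1 := Complex.ofReal_inj.1 hmn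
        have hm : (0:ℝ) < (m:ℝ) + 2 := by positivity
        have hn : (0:ℝ) < (n:ℝ) + 2 := by positivity
        have h2 : ((m : ℝ) + 2)⁻¹ = ((n : ℝ) + 2)⁻¹ := h1
        have h3 : ((m : ℝ) + 2) = ((n : ℝ) + 2) := by
          rw [inv_eq_iff_eq_inv, inv_inv] at h2
          linarith [h2]
        have h4 : (m:ℝ) = (n:ℝ) := by linarith
        exact_mod_cast h4
      · intro n
        simp only [Set.mem_setOf_eq, Complex.norm_real, Real.norm_eq_abs]
        rw [_root_.abs_of_pos (by positivity), inv_lt_one_iff₀]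
        right
        linarith [Nat.cast_nonneg (α := ℝ) n]
    refine Set.Infinite.mono ?_ hball
    intro z hz
    simp only [Set.mem_setOf_eq, Polynomial.eval_mul, Polynomial.eval_prod, Polynomial.eval_sub,
      Polynomial.eval_C, Polynomial.eval_X, Polynomial.eval_one]
    exact key z hz
  have hcop : IsCoprime (∏ i, (Polynomial.C (β i) - Polynomial.X))
      ((Polynomial.C μ') * ∏ i, (1 - Polynomial.C ((starRingEnd ℂ) (β i)) * Polynomial.X)) := by
    apply IsCoprime.mul_right
    · exact ⟨0, Polynomial.C μ'⁻¹, by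
        rw [zero_mul, zero_add, ← Polynomial.C_mul, inv_mul_cancel₀ hμ'ne, Polynomial.C_1]⟩
    · apply IsCoprime.prod_left
      intro i _
      apply IsCoprime.prod_right
      intro j _
      exact st19_coprime_pair (hβ i) (hβ j)
  have hdvd : (∏ i, (Polynomial.C (β i) - Polynomial.X))
      ∣ (∏ i ∈ S, (Polynomial.C (α i) - Polynomial.X))
        * ((Polynomial.C μ') * ∏ i, (1 - Polynomial.C ((starRingEnd ℂ) (β i)) * Polynomial.X)) :=
    ⟨(Polynomial.C ν) * ∏ i ∈ S, (1 - Polynomial.C ((starRingEnd ℂ) (α i)) * Polynomial.X),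
      by linear_combination -hpoly⟩
  have hPb : (∏ i, (Polynomial.C (β i) - Polynomial.X))
      ∣ ∏ i ∈ S, (Polynomial.C (α i) - Polynomial.X) :=
    hcop.dvd_of_dvd_mul_right hdvd
  have hfac : ∀ c : ℂ, (Polynomial.C c - Polynomial.X : Polynomial ℂ) ≠ 0 := by
    intro c h0
    have : (Polynomial.X - Polynomial.C c : Polynomial ℂ) = 0 := by linear_combination -h0
    exact Polynomial.X_sub_C_ne_zero c this
  have hPane : (∏ i ∈ S, (Polynomial.C (α i) - Polynomial.X)) ≠ 0 :=
    Finset.prod_ne_zero_iff.2 fun i _ => hfac _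
  have hdeg := Polynomial.natDegree_le_of_dvd hPb hPane
  have hfacdeg : ∀ c : ℂ, (Polynomial.C c - Polynomial.X : Polynomial ℂ).natDegree = 1 := by
    intro c
    have e : (Polynomial.C c - Polynomial.X : Polynomial ℂ) = -(Polynomial.X - Polynomial.C c) := by ring
    rw [e, Polynomial.natDegree_neg, Polynomial.natDegree_X_sub_C]
  have hd1 : (∏ i, (Polynomial.C (β i) - Polynomial.X) : Polynomial ℂ).natDegree = d := by
    rw [Polynomial.natDegree_prod _ _ (fun i _ => hfac (β i))]
    simp [hfacdeg]
  have hd2 : (∏ i ∈ S, (Polynomial.C (α i) - Polynomial.X) : Polynomial ℂ).natDegree = S.card := by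
    rw [Polynomial.natDegree_prod _ _ (fun i _ => hfac (α i))]
    simp [hfacdeg]
  rw [hd1, hd2] at hdeg
  have hcard : S.card = Fintype.card (Fin d) := by
    have h2 : S.card ≤ d := by simpa using Finset.card_le_univ S
    rw [Fintype.card_fin]
    omega
  have hSuniv : S = Finset.univ := Finset.eq_univ_of_card S hcard
  intro i
  have hi : i ∈ S := hSuniv ▸ Finset.mem_univ i
  exact (Finset.mem_filter.1 hi).2


end St19Aux

/-- Proposition 8.1, "Fatou's associates".
If a sequence of finite Blaschke products of degree `d` converges locally uniformly on
`𝔻` to a finite Blaschke product of degree `d`, then the convergence is uniform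
on `𝔻`. -/
theorem statement19 (d : ℕ) (B : ℕ → ℂ → ℂ) (Blim : ℂ → ℂ)
    (hB : ∀ n, IsFiniteBlaschke d (B n)) (hlim : IsFiniteBlaschke d Blim)
    (hconv : TendstoLocallyUniformlyOn B Blim atTop unitDisc) :
    TendstoUniformlyOn B Blim atTop unitDisc := by
  classical
  obtain ⟨ν, b, hν1, hb, hBlim⟩ := st19_normal hlim
  choose μ a hμ1 ha hBn using fun n => st19_normal (hB n)
  rw [Metric.tendstoUniformlyOn_iff]
  intro ε hε
  by_contra hcon
  rw [Filter.not_eventually] at hcon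
  obtain ⟨s, hs, hsP⟩ := Filter.extraction_of_frequently_atTop hcon
  have hK : IsCompact ((Metric.sphere (0:ℂ) 1) ×ˢ
      (Set.pi Set.univ fun _ : Fin d => Metric.closedBall (0:ℂ) 1)) :=
    (isCompact_sphere 0 1).prod (isCompact_univ_pi fun _ => isCompact_closedBall 0 1)
  have hvK : ∀ n, ((μ (s n), fun i => a (s n) i) : ℂ × (Fin d → ℂ)) ∈
      (Metric.sphere (0:ℂ) 1) ×ˢ
        (Set.pi Set.univ fun _ : Fin d => Metric.closedBall (0:ℂ) 1) := by
    intro n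
    constructor
    · simp [Complex.dist_eq, hμ1 (s n)]
    · intro i _
      simp only [Metric.mem_closedBall]
      rw [Complex.dist_eq, sub_zero]
      exact (ha (s n) i).le
  obtain ⟨p, hmem, t, ht, hconv2⟩ := hK.tendsto_subseq hvK
  obtain ⟨μ0, α⟩ := p
  have hμ0 : ‖μ0‖ = 1 := by
    have h := hmem.1
    simp only [mem_sphere_iff_norm, sub_zero] at h
    exact h
  have hα : ∀ i, ‖α i‖ ≤ 1 := by
    intro i
    have h := hmem.2 i (Set.mem_univ i)
    simp only [Metric.mem_closedBall, Complex.dist_eq, sub_zero] at h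
    exact h
  have hμt : Tendsto (fun n => μ (s (t n))) atTop (𝓝 μ0) :=
    (continuous_fst.tendsto (μ0, α)).comp hconv2
  have hat : ∀ i, Tendsto (fun n => a (s (t n)) i) atTop (𝓝 (α i)) := fun i =>
    (((continuous_apply i).comp continuous_snd).tendsto (μ0, α)).comp hconv2
  have hst : StrictMono (fun n => s (t n)) := hs.comp ht
  have hptw : ∀ z : ℂ, ‖z‖ < 1 → Blim z = μ0 * ∏ i, st19rf (α i) z := by
    intro z hz
    have hzmem : z ∈ unitDisc := by
      rw [unitDisc, Metric.mem_ball, Complex.dist_eq, sub_zero]; exact hz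
    have h1 : Tendsto (fun n => B (s (t n)) z) atTop (𝓝 (Blim z)) :=
      (hconv.tendsto_at hzmem).comp hst.tendsto_atTop
    have h2 : Tendsto (fun n => B (s (t n)) z) atTop (𝓝 (μ0 * ∏ i, st19rf (α i) z)) := by
      simp only [hBn]
      refine hμt.mul (tendsto_finset_prod _ fun i _ => ?_)
      have hnum : Tendsto (fun n => a (s (t n)) i - z) atTop (𝓝 (α i - z)) :=
        (hat i).sub tendsto_const_nhds
      have hden : Tendsto (fun n => 1 - (starRingEnd ℂ) (a (s (t n)) i) * z) atTop
          (𝓝 (1 - (starRingEnd ℂ) (α i) * z)) :=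
        tendsto_const_nhds.sub (((Complex.continuous_conj.tendsto (α i)).comp (hat i)).mul
          tendsto_const_nhds)
      have hne : (1:ℂ) - (starRingEnd ℂ) (α i) * z ≠ 0 :=
        st19_denom_ne (lt_of_le_of_lt (mul_le_of_le_one_left (norm_nonneg z) (hα i)) hz)
      exact hnum.div hden hne
    exact tendsto_nhds_unique h1 h2
  have hν0 : ν ≠ 0 := by intro h; rw [h] at hν1; simp at hν1
  have hμ00 : μ0 ≠ 0 := by intro h; rw [h] at hμ0; simp at hμ0
  have hαlt : ∀ i, ‖α i‖ < 1 := by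
    apply st19_full ν μ0 b α hν0 hμ00 hb hα
    intro z hz
    rw [← hBlim z, hptw z hz]
  set E : ℕ → ℝ := fun n => ‖μ0 - μ (s (t n))‖
    + ∑ i, 4 * ‖α i - a (s (t n)) i‖
        / ((1 - ‖α i‖) * (1 - ‖a (s (t n)) i‖)) with hE
  have hE0 : Tendsto E atTop (𝓝 0) := by
    have h1 : Tendsto (fun n => ‖μ0 - μ (s (t n))‖) atTop (𝓝 0) := by
      have := ((tendsto_const_nhds : Tendsto (fun _ : ℕ => μ0) atTop (𝓝 μ0)).sub hμt).norm
      simpa using this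
    have h2 : Tendsto (fun n => ∑ i, 4 * ‖α i - a (s (t n)) i‖
        / ((1 - ‖α i‖) * (1 - ‖a (s (t n)) i‖))) atTop (𝓝 0) := by
      have e0 : (0:ℝ) = ∑ _i : Fin d, 0 := by simp
      rw [e0]
      apply tendsto_finset_sum
      intro i _
      have h4 : Tendsto (fun n => ‖α i - a (s (t n)) i‖) atTop (𝓝 0) := by
        have := ((tendsto_const_nhds : Tendsto (fun _ : ℕ => α i) atTop (𝓝 (α i))).sub
          (hat i)).norm
        simpa using this
      have hnum : Tendsto (fun n => 4 * ‖α i - a (s (t n)) i‖) atTop (𝓝 0) := by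
        simpa using h4.const_mul (4:ℝ)
      have h3 : Tendsto (fun n => ‖a (s (t n)) i‖) atTop (𝓝 (‖α i‖)) := by
        have := (hat i).norm
        simpa using this
      have hden : Tendsto (fun n => (1 - ‖α i‖) * (1 - ‖a (s (t n)) i‖))
          atTop (𝓝 ((1 - ‖α i‖) * (1 - ‖α i‖))) :=
        tendsto_const_nhds.mul (tendsto_const_nhds.sub h3)
      have hdne : ((1 - ‖α i‖) * (1 - ‖α i‖)) ≠ 0 := by
        have := hαlt i
        exact ne_of_gt (mul_pos (by linarith) (by linarith))
      have := hnum.div hden hdne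
      rw [zero_div] at this
      exact this
    have := h1.add h2
    simpa using this
  have hev : ∀ᶠ n in atTop, E n < ε := hE0.eventually_lt_const hε
  obtain ⟨n, hn⟩ := hev.exists
  obtain ⟨z, hzmem, hdist⟩ : ∃ z ∈ unitDisc, ε ≤ dist (Blim z) (B (s (t n)) z) := by
    have h := hsP (t n)
    push_neg at h
    exact h
  have hz : ‖z‖ < 1 := by
    rw [unitDisc, Metric.mem_ball, Complex.dist_eq, sub_zero] at hzmem
    exact hzmem
  have hbound : dist (Blim z) (B (s (t n)) z) ≤ E n := by
    rw [hptw z hz, hBn (s (t n)) z, Complex.dist_eq]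
    have e : μ0 * ∏ i, st19rf (α i) z - μ (s (t n)) * ∏ i, st19rf (a (s (t n)) i) z
        = (μ0 - μ (s (t n))) * ∏ i, st19rf (α i) z
          + μ (s (t n)) * ((∏ i, st19rf (α i) z) - ∏ i, st19rf (a (s (t n)) i) z) := by ring
    rw [e]
    have hrα : ∀ i, ‖st19rf (α i) z‖ ≤ 1 := fun i => st19_rf_abs_le (hα i) hz.le
    have hra : ∀ i, ‖st19rf (a (s (t n)) i) z‖ ≤ 1 := fun i =>
      st19_rf_abs_le (ha (s (t n)) i).le hz.le
    calc ‖_‖ ≤ ‖(μ0 - μ (s (t n))) * ∏ i, st19rf (α i) z‖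
          + ‖μ (s (t n)) * ((∏ i, st19rf (α i) z) - ∏ i, st19rf (a (s (t n)) i) z)‖ :=
        norm_add_le _ _
      _ = ‖μ0 - μ (s (t n))‖ * ‖∏ i, st19rf (α i) z‖
          + ‖μ (s (t n))‖
            * ‖(∏ i, st19rf (α i) z) - ∏ i, st19rf (a (s (t n)) i) z‖ := by
          rw [norm_mul, norm_mul]
      _ ≤ ‖μ0 - μ (s (t n))‖ * 1
          + 1 * ∑ i, ‖st19rf (α i) z - st19rf (a (s (t n)) i) z‖ := by
          have b1 := mul_le_mul_of_nonneg_left (st19_abs_prod_le_one Finset.univ _ hrα)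
            (norm_nonneg (μ0 - μ (s (t n))))
          have b2' := st19_abs_prod_sub Finset.univ _ _ hrα hra
          have b2 := mul_le_mul (le_of_eq (hμ1 (s (t n)))) b2' (norm_nonneg _) zero_le_one
          linarith
      _ ≤ ‖μ0 - μ (s (t n))‖ + ∑ i, 4 * ‖α i - a (s (t n)) i‖
            / ((1 - ‖α i‖) * (1 - ‖a (s (t n)) i‖)) := by
          rw [mul_one, one_mul]
          have hsum := Finset.sum_le_sum
            (fun i (_ : i ∈ Finset.univ) => st19_rf_dist (hαlt i) (ha (s (t n)) i) hz.le)
          linarith [hsum]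
      _ = E n := rfl
  linarith [hn, hdist, hbound]
end
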